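/- arXiv:2603.11043 — 3 statements merged into one kernel-verified Lean document; each statement's English description precedes it below -/
import Mathlib

section
/- Let α ∈ (0,1], let Y_α be a random variable with law ν_α, and set k = ⌊α⁻¹⌋. Then Var Y_α = (1/12)·(−3α²k²(k+1)² + 2αk(k+1)(2k+1)). In particular, if α = 1/k for a positive integer k then Var Y_α = (k² − 1)/12, and if α ≥ 1/2 then Var Y_α = α(1 − α). Moreover, the function f(α) := Var Y_α is continuous and non-increasing on (0,1); for each positive integer k, f is differentiable on the interval (1/(k+1), 1/k) with f''(α) < 0 there and −k(k+1)(k+2)/6 ≤ f'(α) ≤ −k(k² − 1)/6 ≤ 0; and for every integer k ≥ 2, the right derivative of f at 1/(k+1), the supremum of f' on (1/(k+1), 1/k), the value −k(k² − 1)/6, the infimum of f' on (1/k, 1/(k−1)), and the left derivative of f at 1/(k−1) are all equal. -/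
open MeasureTheory ProbabilityTheory
open scoped ENNReal ProbabilityTheory

noncomputable section

/-- `Q(μ)`: the maximal atom of a measure on `ℤ`. -/
def concQ (μ : MeasureTheory.Measure ℤ) : ℝ := ⨆ x : ℤ, (μ {x}).toReal

/-- `Q(X)`: the maximal atom of an integer-valued random variable. -/
def rvQ {Ω : Type*} [MeasurableSpace Ω] (P : MeasureTheory.Measure Ω) (X : Ω → ℤ) : ℝ :=
  ⨆ x : ℤ, (P (X ⁻¹' {x})).toReal

/-- `Q_j(μ)`: the sum of the `j` largest atoms of a measure on `ℤ`,
expressed as the supremum of the masses of sets of `j` integers. -/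
def concQk (μ : MeasureTheory.Measure ℤ) (j : ℕ) : ℝ :=
  sSup {t : ℝ | ∃ A : Finset ℤ, A.card = j ∧ t = (μ (A : Set ℤ)).toReal}

/-- `μ₁ ≼_ε μ₂`: the concentration function of `μ₁` is `ε`-dominated by that of `μ₂`. -/
def EpsDom (ε : ℝ) (μ₁ μ₂ : MeasureTheory.Measure ℤ) : Prop :=
  ∀ j : ℕ, 0 < j → concQk μ₁ j ≤ (1 + ε) * concQk μ₂ j

/-- The measure `ν_α` on `ℤ`. -/
def nu (α : ℝ) : MeasureTheory.Measure ℤ :=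
  (∑ i ∈ Finset.range ⌊α⁻¹⌋₊, ENNReal.ofReal α • MeasureTheory.Measure.dirac (i : ℤ)) +
    ENNReal.ofReal (1 - α * (⌊α⁻¹⌋₊ : ℝ)) • MeasureTheory.Measure.dirac ((⌊α⁻¹⌋₊ : ℕ) : ℤ)

/-- The law of the sum of independent random variables with laws `μ i`,
i.e. the convolution of the measures `μ i`. -/
def lawSum {n : ℕ} (μ : Fin n → MeasureTheory.Measure ℤ) : MeasureTheory.Measure ℤ :=
  MeasureTheory.Measure.map (fun x : Fin n → ℤ => ∑ i, x i) (MeasureTheory.Measure.pi μ)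

/-- The variance of a measure on `ℤ`. -/
def intVar (μ : MeasureTheory.Measure ℤ) : ℝ := variance (fun n : ℤ => (n : ℝ)) μ

/-- The variance of `ν_α`. -/
def varNu (α : ℝ) : ℝ := intVar (nu α)

/-- A measure on `ℤ` is log-concave. -/
def IsLogConcave (μ : MeasureTheory.Measure ℤ) : Prop :=
  ∀ i : ℤ, μ {i - 1} * μ {i + 1} ≤ μ {i} ^ 2

/-- A measure on `ℤ` is symmetric. -/
def IsSymmetricZ (μ : MeasureTheory.Measure ℤ) : Prop := ∀ i : ℤ, μ {-i} = μ {i}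

/-- A measure on `ℤ` is unimodal. -/
def IsUnimodal (μ : MeasureTheory.Measure ℤ) : Prop :=
  ∃ m : ℤ, (∀ i, m ≤ i → μ {i + 1} ≤ μ {i}) ∧ (∀ i, i ≤ m → μ {i - 1} ≤ μ {i})

/-- A measure on `ℤ` is standard extremal for `α`: it is the law of `X + i`
where `X ~ ν_α` or `-X ~ ν_α`. -/
def StandardExtremal (α : ℝ) (μ : MeasureTheory.Measure ℤ) : Prop :=
  ∃ i : ℤ, μ = MeasureTheory.Measure.map (· + i) (nu α) ∨
    μ = MeasureTheory.Measure.map (fun x => -x + i) (nu α)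

/-- A measure on `ℤ` is extremal for `α`. -/
def IsExtremal (α : ℝ) (μ : MeasureTheory.Measure ℤ) : Prop :=
  ∃ (S : Finset ℤ) (b : ℤ), S.card = ⌊α⁻¹⌋₊ ∧ b ∉ S ∧
    (∀ i ∈ S, μ {i} = ENNReal.ofReal α) ∧
    μ {b} = ENNReal.ofReal (1 - (⌊α⁻¹⌋₊ : ℝ) * α)

/-- A sequence of measures is a balanced standard extremal sequence for `α`. -/
def BalancedSE {n : ℕ} (α : Fin n → ℝ) (μ : Fin n → MeasureTheory.Measure ℤ) : Prop :=
  (∀ i, StandardExtremal (α i) (μ i)) ∧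
    ∃ σ : Equiv.Perm (Fin n), ∀ i,
      μ (σ i) = MeasureTheory.Measure.map (fun x : ℤ => -x) (μ i)

/-- A tuple is balanced if a balanced standard extremal sequence exists for it. -/
def BalancedTuple {n : ℕ} (α : Fin n → ℝ) : Prop := ∃ μ, BalancedSE α μ

/-- A tuple is strongly balanced if each value is attained an even number of times. -/
def StronglyBalanced {n : ℕ} (α : Fin n → ℝ) : Prop :=
  ∀ a : ℝ, Even (Finset.univ.filter fun i => α i = a).card

/-- `t_SE^bal(α)`: the probability that the sum of a balanced standard extremal
sequence for `α` equals `0` (this value does not depend on the chosen sequence). -/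
def tSEbal {n : ℕ} (α : Fin n → ℝ) : ℝ :=
  sSup {t : ℝ | ∃ μ : Fin n → MeasureTheory.Measure ℤ,
    BalancedSE α μ ∧ t = (lawSum μ {0}).toReal}

/-- `t(α)`: the supremum of `Q(μ₁ * ⋯ * μ_n)` over probability measures with
`Q(μ i) ≤ α i`. -/
def tOpt {n : ℕ} (α : Fin n → ℝ) : ℝ :=
  sSup {t : ℝ | ∃ μ : Fin n → MeasureTheory.Measure ℤ,
    (∀ i, MeasureTheory.IsProbabilityMeasure (μ i)) ∧
    (∀ i, concQ (μ i) ≤ α i) ∧ t = concQ (lawSum μ)}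

/-- `t_SE(α)`: the maximal concentration of the convolution of a standard extremal
sequence for `α`. -/
def tSE {n : ℕ} (α : Fin n → ℝ) : ℝ :=
  sSup {t : ℝ | ∃ μ : Fin n → MeasureTheory.Measure ℤ,
    (∀ i, StandardExtremal (α i) (μ i)) ∧ t = concQ (lawSum μ)}

end

noncomputable section

/-- The polynomial giving `varNu` on the interval `[1/(K+1), 1/K]`. -/
def Gf (K α : ℝ) : ℝ := K * (K + 1) * (2 * K + 1) / 6 * α - K ^ 2 * (K + 1) ^ 2 / 4 * α ^ 2

/-- The derivative of `Gf K`. -/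
def Df (K α : ℝ) : ℝ := K * (K + 1) * (2 * K + 1) / 6 - K ^ 2 * (K + 1) ^ 2 / 2 * α

lemma hasDerivAt_Gf (K α : ℝ) : HasDerivAt (Gf K) (Df K α) α := by
  have h := ((hasDerivAt_id α).const_mul (K * (K + 1) * (2 * K + 1) / 6)).sub
    ((hasDerivAt_pow 2 α).const_mul (K ^ 2 * (K + 1) ^ 2 / 4))
  exact h.congr_deriv (by simp [Df]; ring)

lemma hasDerivAt_Df (K α : ℝ) : HasDerivAt (Df K) (-(K ^ 2 * (K + 1) ^ 2 / 2)) α := by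
  have h := ((hasDerivAt_id α).const_mul (K ^ 2 * (K + 1) ^ 2 / 2)).const_sub
    (K * (K + 1) * (2 * K + 1) / 6)
  exact h.congr_deriv (by simp)

lemma integrable_dirac' (f : ℤ → ℝ) (a : ℤ) : Integrable f (Measure.dirac a) := by
  constructor
  · exact measurable_from_top.aestronglyMeasurable
  · simp [HasFiniteIntegral, lintegral_dirac]

lemma integrable_nu (α : ℝ) (f : ℤ → ℝ) : Integrable f (nu α) := by
  rw [nu, integrable_add_measure]
  exact ⟨(integrable_finset_sum_measure).2
      (fun i _ => (integrable_dirac' f _).smul_measure ENNReal.ofReal_ne_top),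
    (integrable_dirac' f _).smul_measure ENNReal.ofReal_ne_top⟩

lemma integral_nu (α : ℝ) (hα : 0 ≤ α) (hc : 0 ≤ 1 - α * (⌊α⁻¹⌋₊ : ℝ)) (f : ℤ → ℝ) :
    ∫ x, f x ∂(nu α) = α * ∑ i ∈ Finset.range ⌊α⁻¹⌋₊, f i
      + (1 - α * (⌊α⁻¹⌋₊ : ℝ)) * f (⌊α⁻¹⌋₊ : ℕ) := by
  rw [nu, integral_add_measure ((integrable_finset_sum_measure).2
      (fun i _ => (integrable_dirac' f _).smul_measure ENNReal.ofReal_ne_top))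
      ((integrable_dirac' f _).smul_measure ENNReal.ofReal_ne_top),
    integral_finset_sum_measure
      (fun i _ => (integrable_dirac' f _).smul_measure ENNReal.ofReal_ne_top)]
  simp only [integral_smul_measure, integral_dirac, smul_eq_mul,
    ENNReal.toReal_ofReal hα, ENNReal.toReal_ofReal hc, ← Finset.mul_sum]

lemma isProb_nu {α : ℝ} (hα : 0 < α) (h1 : α ≤ 1) : IsProbabilityMeasure (nu α) := by
  have hk : (⌊α⁻¹⌋₊ : ℝ) ≤ α⁻¹ := Nat.floor_le (by positivity)
  have hak : α * (⌊α⁻¹⌋₊ : ℝ) ≤ 1 := by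
    calc α * (⌊α⁻¹⌋₊ : ℝ) ≤ α * α⁻¹ := by nlinarith
    _ = 1 := mul_inv_cancel₀ hα.ne'
  constructor
  rw [nu]
  simp only [Measure.coe_add, Pi.add_apply, Measure.coe_finset_sum, Finset.sum_apply,
    Measure.coe_smul, Pi.smul_apply, measure_univ, smul_eq_mul, mul_one, Finset.sum_const,
    Finset.card_range, nsmul_eq_mul]
  rw [← ENNReal.ofReal_natCast, ← ENNReal.ofReal_mul (by positivity),
    ← ENNReal.ofReal_add (by nlinarith) (by linarith)]
  norm_num [mul_comm]

lemma sum_range_cast (k : ℕ) :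
    ∑ i ∈ Finset.range k, ((i : ℤ) : ℝ) = (k : ℝ) * ((k : ℝ) - 1) / 2 := by
  induction k with
  | zero => simp
  | succ n ih => rw [Finset.sum_range_succ, ih]; push_cast; ring

lemma sum_range_sq_cast (k : ℕ) :
    ∑ i ∈ Finset.range k, ((i : ℤ) : ℝ) ^ 2 = (k : ℝ) * ((k : ℝ) - 1) * (2 * (k : ℝ) - 1) / 6 := by
  induction k with
  | zero => simp
  | succ n ih => rw [Finset.sum_range_succ, ih]; push_cast; ring

lemma varNu_eq {α : ℝ} (hα : 0 < α) (h1 : α ≤ 1) : varNu α = Gf (⌊α⁻¹⌋₊ : ℝ) α := by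
  have hpr := isProb_nu hα h1
  have hk : (⌊α⁻¹⌋₊ : ℝ) ≤ α⁻¹ := Nat.floor_le (by positivity)
  have hc : 0 ≤ 1 - α * (⌊α⁻¹⌋₊ : ℝ) := by
    have : α * (⌊α⁻¹⌋₊ : ℝ) ≤ α * α⁻¹ := by nlinarith
    rw [mul_inv_cancel₀ hα.ne'] at this; linarith
  have hm : MemLp (fun n : ℤ => (n : ℝ)) 2 (nu α) :=
    (memLp_two_iff_integrable_sq measurable_from_top.aestronglyMeasurable).2
      (integrable_nu α _)
  rw [varNu, intVar, variance_eq_sub hm]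
  have hpow : ((fun n : ℤ => (n : ℝ)) ^ 2) = fun n : ℤ => (n : ℝ) ^ 2 := rfl
  rw [hpow, integral_nu α hα.le hc, integral_nu α hα.le hc, sum_range_cast, sum_range_sq_cast]
  push_cast [Gf]
  ring

/-- On `(1/(k+1), 1/k]` the floor of `α⁻¹` is `k`. -/
lemma floor_inv_eq {k : ℕ} (hk : 0 < k) {α : ℝ}
    (h1 : 1 / ((k : ℝ) + 1) < α) (h2 : α ≤ 1 / (k : ℝ)) : ⌊α⁻¹⌋₊ = k := by
  have hkR : (0 : ℝ) < k := Nat.cast_pos.2 hk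
  have hα : 0 < α := lt_trans (by positivity) h1
  rw [Nat.floor_eq_iff (by positivity)]
  constructor
  · rw [le_inv_comm₀ hkR hα]
    simpa [one_div] using h2
  · rw [inv_lt_comm₀ hα (by positivity)]
    simpa [one_div] using h1

lemma Gf_junction {K : ℝ} (hK : 0 < K + 1) : Gf K (1 / (K + 1)) = Gf (K + 1) (1 / (K + 1)) := by
  have h : K + 1 ≠ 0 := hK.ne'
  field_simp [Gf]
  unfold Gf
  field_simp
  ring

/-- `varNu` agrees with `Gf k` on the closed interval `[1/(k+1), 1/k]`. -/
lemma varNu_eq_on {k : ℕ} (hk : 0 < k) {α : ℝ}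
    (hα : α ∈ Set.Icc (1 / ((k : ℝ) + 1)) (1 / (k : ℝ))) : varNu α = Gf (k : ℝ) α := by
  have hkR : (0 : ℝ) < k := Nat.cast_pos.2 hk
  have hk1R : (0 : ℝ) < (k : ℝ) + 1 := by positivity
  rcases eq_or_lt_of_le hα.1 with h | h
  · -- α is the left endpoint `1/(k+1)`; the floor is `k+1`, but the polynomials agree.
    have hfl : ⌊α⁻¹⌋₊ = k + 1 := by
      apply floor_inv_eq (Nat.succ_pos k)
      · push_cast; rw [← h, div_lt_div_iff₀ (by positivity) (by positivity)]; linarith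
      · push_cast; rw [← h]
    have hα0 : 0 < α := by rw [← h]; positivity
    have hα1 : α ≤ 1 := by
      rw [← h]; rw [div_le_one hk1R]; push_cast; linarith
    rw [varNu_eq hα0 hα1, hfl, ← h]
    push_cast
    exact (Gf_junction hk1R).symm
  · have hα0 : 0 < α := lt_trans (by positivity) h
    have hα1 : α ≤ 1 := by
      calc α ≤ 1 / (k : ℝ) := hα.2
      _ ≤ 1 := by rw [div_le_one hkR]; exact_mod_cast hk
    rw [varNu_eq hα0 hα1, floor_inv_eq hk h hα.2]

/-- On the open interval the derivative of `varNu` is `Df k`. -/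
lemma deriv_varNu_on {k : ℕ} (hk : 0 < k) {α : ℝ}
    (hα : α ∈ Set.Ioo (1 / ((k : ℝ) + 1)) (1 / (k : ℝ))) :
    HasDerivAt varNu (Df (k : ℝ) α) α := by
  have hev : varNu =ᶠ[nhds α] Gf (k : ℝ) :=
    Filter.eventuallyEq_of_mem (Ioo_mem_nhds hα.1 hα.2)
      (fun x hx => varNu_eq_on hk ⟨hx.1.le, hx.2.le⟩)
  exact (hasDerivAt_Gf (k : ℝ) α).congr_of_eventuallyEq hev

lemma continuous_Gf (K : ℝ) : Continuous (Gf K) := by unfold Gf; fun_prop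

lemma Df_bounds {k : ℕ} (hk : 0 < k) {α : ℝ}
    (h1 : 1 / ((k : ℝ) + 1) ≤ α) (h2 : α ≤ 1 / (k : ℝ)) :
    -(1 / 6 : ℝ) * (k : ℝ) * ((k : ℝ) + 1) * ((k : ℝ) + 2) ≤ Df (k : ℝ) α ∧
      Df (k : ℝ) α ≤ -(1 / 6 : ℝ) * (k : ℝ) * ((k : ℝ) ^ 2 - 1) := by
  have hK : (1 : ℝ) ≤ (k : ℝ) := by exact_mod_cast hk
  have hK0 : (0 : ℝ) < (k : ℝ) := by linarith
  have ha1 : 1 ≤ α * ((k : ℝ) + 1) := (div_le_iff₀ (by positivity)).1 h1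
  have ha2 : α * (k : ℝ) ≤ 1 := by
    rw [le_div_iff₀ hK0] at h2; exact h2
  rw [Df]
  constructor
  · nlinarith [mul_nonneg (by nlinarith : (0:ℝ) ≤ 1 - α * (k : ℝ))
      (by positivity : (0:ℝ) ≤ (k : ℝ) * ((k : ℝ) + 1) ^ 2 / 2)]
  · nlinarith [mul_nonneg (by nlinarith : (0:ℝ) ≤ α * ((k : ℝ) + 1) - 1)
      (by positivity : (0:ℝ) ≤ (k : ℝ) ^ 2 * ((k : ℝ) + 1) / 2)]

lemma neg_sixth_nonpos {k : ℕ} (hk : 0 < k) :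
    -(1 / 6 : ℝ) * (k : ℝ) * ((k : ℝ) ^ 2 - 1) ≤ 0 := by
  have hK : (1 : ℝ) ≤ (k : ℝ) := by exact_mod_cast hk
  nlinarith

lemma anti_piece {k : ℕ} (hk : 0 < k) :
    AntitoneOn varNu (Set.Icc (1 / ((k : ℝ) + 1)) (1 / (k : ℝ))) := by
  have hG : AntitoneOn (Gf (k : ℝ)) (Set.Icc (1 / ((k : ℝ) + 1)) (1 / (k : ℝ))) := by
    apply antitoneOn_of_deriv_nonpos (convex_Icc _ _) (continuous_Gf _).continuousOn
    · intro x _; exact (hasDerivAt_Gf _ x).differentiableAt.differentiableWithinAt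
    · intro x hx
      rw [interior_Icc] at hx
      rw [(hasDerivAt_Gf _ x).deriv]
      exact le_trans (Df_bounds hk hx.1.le hx.2.le).2 (neg_sixth_nonpos hk)
  intro a ha b hb hab
  rw [varNu_eq_on hk ha, varNu_eq_on hk hb]
  exact hG ha hb hab

lemma antitoneOn_glue {f : ℝ → ℝ} {a b c : ℝ} (hab : a ≤ b) (hbc : b ≤ c)
    (h1 : AntitoneOn f (Set.Icc a b)) (h2 : AntitoneOn f (Set.Icc b c)) :
    AntitoneOn f (Set.Icc a c) := by
  intro x hx y hy hxy
  rcases le_total y b with h | h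
  · exact h1 ⟨hx.1, hxy.trans h⟩ ⟨hy.1, h⟩ hxy
  · rcases le_total x b with h' | h'
    · exact le_trans (h2 ⟨le_rfl, hbc⟩ ⟨h, hy.2⟩ h) (h1 ⟨hx.1, h'⟩ ⟨hab, le_rfl⟩ h')
    · exact h2 ⟨h', hx.2⟩ ⟨h, hy.2⟩ hxy

lemma anti_aux : ∀ m : ℕ, AntitoneOn varNu (Set.Icc (1 / ((m : ℝ) + 2)) 1) := by
  intro m
  induction m with
  | zero =>
    have h := anti_piece (k := 1) one_pos
    norm_num at h ⊢
    exact h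
  | succ n ih =>
    have hp : AntitoneOn varNu (Set.Icc (1 / ((n : ℝ) + 3)) (1 / ((n : ℝ) + 2))) := by
      have h := anti_piece (k := n + 2) (by omega)
      push_cast at h
      rw [show (n : ℝ) + 2 + 1 = (n : ℝ) + 3 by ring] at h
      exact h
    have h := antitoneOn_glue (a := 1 / ((n : ℝ) + 3)) (b := 1 / ((n : ℝ) + 2)) (c := 1)
      (by rw [div_le_div_iff₀ (by positivity) (by positivity)]; linarith)
      (by rw [div_le_one (by positivity)]; linarith) hp ih
    push_cast
    rw [show (n : ℝ) + 1 + 2 = (n : ℝ) + 3 by ring]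
    exact h

lemma mem_interval_of_Ioo {x : ℝ} (hx : x ∈ Set.Ioo (0:ℝ) 1) :
    1 ≤ ⌊x⁻¹⌋₊ ∧ 1 / ((⌊x⁻¹⌋₊ : ℝ) + 1) < x ∧ x ≤ 1 / (⌊x⁻¹⌋₊ : ℝ) := by
  have h1x : (1 : ℝ) ≤ x⁻¹ := by
    rw [le_inv_comm₀ (by norm_num) hx.1]
    simpa using hx.2.le
  have hk1 : 1 ≤ ⌊x⁻¹⌋₊ := Nat.le_floor (by exact_mod_cast h1x)
  have hkR : (0:ℝ) < (⌊x⁻¹⌋₊ : ℝ) := by exact_mod_cast hk1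
  have hfl : (⌊x⁻¹⌋₊ : ℝ) ≤ x⁻¹ := Nat.floor_le (by positivity)
  have hfu : x⁻¹ < (⌊x⁻¹⌋₊ : ℝ) + 1 := Nat.lt_floor_add_one _
  refine ⟨hk1, ?_, ?_⟩
  · rw [div_lt_iff₀ (by positivity)]
    nlinarith [mul_inv_cancel₀ hx.1.ne']
  · rw [le_div_iff₀ hkR]
    nlinarith [mul_inv_cancel₀ hx.1.ne']

lemma anti_varNu : AntitoneOn varNu (Set.Ioo (0:ℝ) 1) := by
  intro x hx y hy hxy
  obtain ⟨hk1, hxlow, _⟩ := mem_interval_of_Ioo hx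
  obtain ⟨m, hm⟩ : ∃ m, ⌊x⁻¹⌋₊ = m + 1 := ⟨⌊x⁻¹⌋₊ - 1, by omega⟩
  rw [hm] at hxlow
  push_cast at hxlow
  rw [show (m : ℝ) + 1 + 1 = (m : ℝ) + 2 by ring] at hxlow
  exact anti_aux m ⟨hxlow.le, hx.2.le⟩ ⟨hxlow.le.trans hxy, hy.2.le⟩ hxy

lemma varNu_eq_on' (m : ℕ) {α : ℝ} (h1 : 1 / ((m : ℝ) + 2) ≤ α) (h2 : α ≤ 1 / ((m : ℝ) + 1)) :
    varNu α = Gf ((m : ℝ) + 1) α := by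
  have h := varNu_eq_on (k := m + 1) (Nat.succ_pos m) (α := α)
    ⟨by push_cast; rw [show (m : ℝ) + 1 + 1 = (m : ℝ) + 2 by ring]; exact h1,
     by push_cast; exact h2⟩
  push_cast at h
  exact h

lemma deriv_varNu_on' (m : ℕ) {α : ℝ} (h1 : 1 / ((m : ℝ) + 2) < α) (h2 : α < 1 / ((m : ℝ) + 1)) :
    HasDerivAt varNu (Df ((m : ℝ) + 1) α) α := by
  have h := deriv_varNu_on (k := m + 1) (Nat.succ_pos m) (α := α)
    ⟨by push_cast; rw [show (m : ℝ) + 1 + 1 = (m : ℝ) + 2 by ring]; exact h1,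
     by push_cast; exact h2⟩
  push_cast at h
  exact h

lemma cont_varNu : ContinuousOn varNu (Set.Ioo (0:ℝ) 1) := by
  intro x hx
  obtain ⟨hk1, hxlow, hxup⟩ := mem_interval_of_Ioo hx
  rcases lt_or_eq_of_le hxup with h | h
  · exact (((continuous_Gf ((⌊x⁻¹⌋₊ : ℕ) : ℝ)).continuousAt).congr_of_eventuallyEq
      (Filter.eventuallyEq_of_mem (Ioo_mem_nhds hxlow h)
        (fun y hy => varNu_eq_on hk1 ⟨hy.1.le, hy.2.le⟩))).continuousWithinAt
  · have hk2 : 2 ≤ ⌊x⁻¹⌋₊ := by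
      by_contra hc
      have h1 : ⌊x⁻¹⌋₊ = 1 := by omega
      rw [h1] at h
      norm_num at h
      exact absurd hx.2 (by rw [h]; exact lt_irrefl 1)
    obtain ⟨m, hm⟩ : ∃ m, ⌊x⁻¹⌋₊ = m + 2 := ⟨⌊x⁻¹⌋₊ - 2, by omega⟩
    have hkR : ((⌊x⁻¹⌋₊ : ℕ) : ℝ) = (m : ℝ) + 2 := by rw [hm]; push_cast; ring
    have hxv : x = 1 / ((m : ℝ) + 2) := by rw [h, hkR]
    have h23 : 1 / ((m : ℝ) + 3) < x := by
      rw [hxv, div_lt_div_iff₀ (by positivity) (by positivity)]; linarith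
    have h12 : x < 1 / ((m : ℝ) + 1) := by
      rw [hxv, div_lt_div_iff₀ (by positivity) (by positivity)]; linarith
    have hvalL : varNu x = Gf ((m : ℝ) + 2) x := by
      have := varNu_eq_on' (m + 1) (α := x)
        (by push_cast; rw [show (m : ℝ) + 1 + 2 = (m : ℝ) + 3 by ring]; exact h23.le)
        (by push_cast; rw [show (m : ℝ) + 1 + 1 = (m : ℝ) + 2 by ring, ← hxv])
      push_cast at this
      rw [this]; ring_nf
    have hvalR : varNu x = Gf ((m : ℝ) + 1) x := by
      have hj := Gf_junction (K := (m : ℝ) + 1) (by positivity)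
      rw [show (m : ℝ) + 1 + 1 = (m : ℝ) + 2 by ring] at hj
      rw [hvalL, hxv, ← hj]
    have hleft : ContinuousWithinAt varNu (Set.Iic x) x := by
      have hmem : Set.Ioc (1 / ((m : ℝ) + 3)) x ∈ nhdsWithin x (Set.Iic x) := by
        rw [← Set.Ioi_inter_Iic]
        exact Filter.inter_mem (mem_nhdsWithin_of_mem_nhds (Ioi_mem_nhds h23))
          self_mem_nhdsWithin
      refine ((continuous_Gf ((m : ℝ) + 2)).continuousWithinAt).congr_of_eventuallyEq
        (Filter.eventuallyEq_of_mem hmem (fun y hy => ?_)) hvalL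
      have := varNu_eq_on' (m + 1) (α := y)
        (by push_cast; rw [show (m : ℝ) + 1 + 2 = (m : ℝ) + 3 by ring]; exact hy.1.le)
        (by push_cast; rw [show (m : ℝ) + 1 + 1 = (m : ℝ) + 2 by ring, ← hxv]; exact hy.2)
      push_cast at this
      rw [this]; ring_nf
    have hright : ContinuousWithinAt varNu (Set.Ici x) x := by
      have hmem : Set.Ico x (1 / ((m : ℝ) + 1)) ∈ nhdsWithin x (Set.Ici x) := by
        rw [← Set.Ici_inter_Iio]
        exact Filter.inter_mem self_mem_nhdsWithin
          (mem_nhdsWithin_of_mem_nhds (Iio_mem_nhds h12))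
      refine ((continuous_Gf ((m : ℝ) + 1)).continuousWithinAt).congr_of_eventuallyEq
        (Filter.eventuallyEq_of_mem hmem (fun y hy => ?_)) hvalR
      exact varNu_eq_on' m (by rw [← hxv]; exact hy.1) hy.2.le
    have hu := hleft.union hright
    rw [Set.Iic_union_Ici] at hu
    exact ((continuousWithinAt_univ varNu x).1 hu).continuousWithinAt

lemma image_deriv (m : ℕ) :
    deriv varNu '' Set.Ioo (1 / ((m : ℝ) + 2)) (1 / ((m : ℝ) + 1)) =
      Set.Ioo (Df ((m : ℝ) + 1) (1 / ((m : ℝ) + 1))) (Df ((m : ℝ) + 1) (1 / ((m : ℝ) + 2))) := by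
  set K := (m : ℝ) + 1 with hK
  have hK0 : (0 : ℝ) < K := by positivity
  have hB : (0 : ℝ) < K ^ 2 * (K + 1) ^ 2 / 2 := by positivity
  have h21 : (m : ℝ) + 2 = K + 1 := by rw [hK]; ring
  rw [h21, Set.image_congr (fun y hy => (deriv_varNu_on' m (by rw [← h21] at hy; exact hy.1)
    (hy.2 : y < 1 / K)).deriv)]
  ext y
  simp only [Set.mem_image, Set.mem_Ioo]
  constructor
  · rintro ⟨z, hz, rfl⟩
    rw [Df, Df, Df]
    constructor
    · nlinarith [mul_pos hB (sub_pos.2 hz.2)]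
    · nlinarith [mul_pos hB (sub_pos.2 hz.1)]
  · intro hy
    rw [Df, Df] at hy
    refine ⟨(K * (K + 1) * (2 * K + 1) / 6 - y) / (K ^ 2 * (K + 1) ^ 2 / 2), ⟨?_, ?_⟩, ?_⟩
    · rw [lt_div_iff₀ hB]
      nlinarith [hy.2]
    · rw [div_lt_iff₀ hB]
      nlinarith [hy.1]
    · rw [Df, ← hK]
      field_simp
      ring

lemma Df_lt {K : ℝ} (hK : 0 < K) : Df K (1 / K) < Df K (1 / (K + 1)) := by
  have h : 1 / (K + 1) < 1 / K := by
    rw [div_lt_div_iff₀ (by positivity) hK]; linarith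
  rw [Df, Df]
  nlinarith [mul_pos (show (0:ℝ) < K ^ 2 * (K + 1) ^ 2 / 2 by positivity) (sub_pos.2 h)]

lemma derivWithin_right (m : ℕ) :
    derivWithin varNu (Set.Ici (1 / ((m : ℝ) + 2))) (1 / ((m : ℝ) + 2)) =
      Df ((m : ℝ) + 1) (1 / ((m : ℝ) + 2)) := by
  set a := 1 / ((m : ℝ) + 2) with ha
  have hab : a < 1 / ((m : ℝ) + 1) := by
    rw [ha, div_lt_div_iff₀ (by positivity) (by positivity)]; linarith
  have hmem : Set.Ico a (1 / ((m : ℝ) + 1)) ∈ nhdsWithin a (Set.Ici a) := by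
    rw [← Set.Ici_inter_Iio]
    exact Filter.inter_mem self_mem_nhdsWithin (mem_nhdsWithin_of_mem_nhds (Iio_mem_nhds hab))
  have hev : varNu =ᶠ[nhdsWithin a (Set.Ici a)] Gf ((m : ℝ) + 1) :=
    Filter.eventuallyEq_of_mem hmem (fun y hy => varNu_eq_on' m hy.1 hy.2.le)
  rw [hev.derivWithin_eq (varNu_eq_on' m le_rfl hab.le)]
  exact ((hasDerivAt_Gf ((m : ℝ) + 1) a).hasDerivWithinAt).derivWithin
    ((uniqueDiffOn_Ici a) a Set.self_mem_Ici)

lemma derivWithin_left (m : ℕ) :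
    derivWithin varNu (Set.Iic (1 / ((m : ℝ) + 1))) (1 / ((m : ℝ) + 1)) =
      Df ((m : ℝ) + 1) (1 / ((m : ℝ) + 1)) := by
  set b := 1 / ((m : ℝ) + 1) with hb
  have hab : 1 / ((m : ℝ) + 2) < b := by
    rw [hb, div_lt_div_iff₀ (by positivity) (by positivity)]; linarith
  have hmem : Set.Ioc (1 / ((m : ℝ) + 2)) b ∈ nhdsWithin b (Set.Iic b) := by
    rw [← Set.Ioi_inter_Iic]
    exact Filter.inter_mem (mem_nhdsWithin_of_mem_nhds (Ioi_mem_nhds hab)) self_mem_nhdsWithin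
  have hev : varNu =ᶠ[nhdsWithin b (Set.Iic b)] Gf ((m : ℝ) + 1) :=
    Filter.eventuallyEq_of_mem hmem (fun y hy => varNu_eq_on' m hy.1.le hy.2)
  rw [hev.derivWithin_eq (varNu_eq_on' m hab.le le_rfl)]
  exact ((hasDerivAt_Gf ((m : ℝ) + 1) b).hasDerivWithinAt).derivWithin
    ((uniqueDiffOn_Iic b) b Set.self_mem_Iic)

end

theorem statement1 :
    (∀ α : ℝ, 0 < α → α ≤ 1 →
      varNu α = (1 / 12) *
        (-3 * α ^ 2 * (⌊α⁻¹⌋₊ : ℝ) ^ 2 * ((⌊α⁻¹⌋₊ : ℝ) + 1) ^ 2 +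
          2 * α * (⌊α⁻¹⌋₊ : ℝ) * ((⌊α⁻¹⌋₊ : ℝ) + 1) * (2 * (⌊α⁻¹⌋₊ : ℝ) + 1))) ∧
    (∀ k : ℕ, 0 < k → varNu (1 / (k : ℝ)) = ((k : ℝ) ^ 2 - 1) / 12) ∧
    (∀ α : ℝ, 1 / 2 ≤ α → α ≤ 1 → varNu α = α * (1 - α)) ∧
    ContinuousOn varNu (Set.Ioo 0 1) ∧
    AntitoneOn varNu (Set.Ioo 0 1) ∧
    (∀ k : ℕ, 0 < k → ∀ α : ℝ, α ∈ Set.Ioo (1 / ((k : ℝ) + 1)) (1 / (k : ℝ)) →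
      DifferentiableAt ℝ varNu α ∧
      deriv (deriv varNu) α < 0 ∧
      -(1 / 6 : ℝ) * (k : ℝ) * ((k : ℝ) + 1) * ((k : ℝ) + 2) ≤ deriv varNu α ∧
      deriv varNu α ≤ -(1 / 6 : ℝ) * (k : ℝ) * ((k : ℝ) ^ 2 - 1) ∧
      -(1 / 6 : ℝ) * (k : ℝ) * ((k : ℝ) ^ 2 - 1) ≤ 0) ∧
    (∀ k : ℕ, 2 ≤ k →
      derivWithin varNu (Set.Ici (1 / ((k : ℝ) + 1))) (1 / ((k : ℝ) + 1)) =
        -(1 / 6 : ℝ) * (k : ℝ) * ((k : ℝ) ^ 2 - 1) ∧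
      sSup (deriv varNu '' Set.Ioo (1 / ((k : ℝ) + 1)) (1 / (k : ℝ))) =
        -(1 / 6 : ℝ) * (k : ℝ) * ((k : ℝ) ^ 2 - 1) ∧
      sInf (deriv varNu '' Set.Ioo (1 / (k : ℝ)) (1 / ((k : ℝ) - 1))) =
        -(1 / 6 : ℝ) * (k : ℝ) * ((k : ℝ) ^ 2 - 1) ∧
      derivWithin varNu (Set.Iic (1 / ((k : ℝ) - 1))) (1 / ((k : ℝ) - 1)) =
        -(1 / 6 : ℝ) * (k : ℝ) * ((k : ℝ) ^ 2 - 1)) := by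
  refine ⟨?_, ?_, ?_, cont_varNu, anti_varNu, ?_, ?_⟩
  · intro α h0 h1
    rw [varNu_eq h0 h1, Gf]; ring
  · intro k hk
    have hkR : (0:ℝ) < (k:ℝ) := Nat.cast_pos.2 hk
    have hmem : (1/(k:ℝ)) ∈ Set.Icc (1/((k:ℝ)+1)) (1/(k:ℝ)) :=
      ⟨by rw [div_le_div_iff₀ (by positivity) hkR]; linarith, le_rfl⟩
    rw [varNu_eq_on hk hmem, Gf]
    field_simp
    ring
  · intro α h1 h2
    have h := varNu_eq_on (k := 1) one_pos (α := α)
      ⟨by norm_num; linarith, by norm_num; linarith⟩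
    rw [h, Gf]
    norm_num
    ring
  · intro k hk α hα
    have hd := deriv_varNu_on hk hα
    have hb := Df_bounds hk hα.1.le hα.2.le
    refine ⟨hd.differentiableAt, ?_, ?_, ?_, neg_sixth_nonpos hk⟩
    · have hev2 : deriv varNu =ᶠ[nhds α] Df ((k:ℕ):ℝ) :=
        Filter.eventuallyEq_of_mem (Ioo_mem_nhds hα.1 hα.2)
          (fun y hy => (deriv_varNu_on hk hy).deriv)
      rw [hev2.deriv_eq, (hasDerivAt_Df _ α).deriv]
      have hK : (0:ℝ) < (k:ℝ) := Nat.cast_pos.2 hk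
      have hp : (0:ℝ) < (k:ℝ)^2*((k:ℝ)+1)^2/2 := by positivity
      linarith
    · rw [hd.deriv]; exact hb.1
    · rw [hd.deriv]; exact hb.2
  · intro k hk
    have hK2 : (2:ℝ) ≤ (k:ℝ) := by exact_mod_cast hk
    have e1 : ((k-1:ℕ):ℝ) = (k:ℝ) - 1 := by rw [Nat.cast_sub (by omega)]; norm_num
    have e2 : ((k-2:ℕ):ℝ) = (k:ℝ) - 2 := by rw [Nat.cast_sub (by omega)]; norm_num
    have h0k : ((k:ℝ)+1) ≠ 0 := by positivity
    have h1k : ((k:ℝ)-1) ≠ 0 := ne_of_gt (by linarith)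
    refine ⟨?_, ?_, ?_, ?_⟩
    · have h := derivWithin_right (k-1)
      rw [e1, show (k:ℝ)-1+2 = (k:ℝ)+1 by ring, show (k:ℝ)-1+1 = (k:ℝ) by ring] at h
      rw [h, Df]
      field_simp
      ring
    · have h := image_deriv (k-1)
      rw [e1, show (k:ℝ)-1+2 = (k:ℝ)+1 by ring, show (k:ℝ)-1+1 = (k:ℝ) by ring] at h
      rw [h, csSup_Ioo (Df_lt (by linarith : (0:ℝ) < (k:ℝ))), Df]
      field_simp
      ring
    · have h := image_deriv (k-2)
      rw [e2, show (k:ℝ)-2+2 = (k:ℝ) by ring, show (k:ℝ)-2+1 = (k:ℝ)-1 by ring] at h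
      have hlt := Df_lt (K := (k:ℝ)-1) (by linarith)
      rw [show (k:ℝ)-1+1 = (k:ℝ) by ring] at hlt
      rw [h, csInf_Ioo hlt, Df]
      field_simp
      ring
    · have h := derivWithin_left (k-2)
      rw [e2, show (k:ℝ)-2+1 = (k:ℝ)-1 by ring] at h
      rw [h, Df]
      field_simp
      ring
end

section
/- The quantity t_SE(α_1, …, α_n) is non-decreasing in each argument α_i ∈ (0,1]. -/
open MeasureTheory ProbabilityTheory
open scoped ENNReal ProbabilityTheory

section Aux
open Finset


/-- a nonnegative function on ℤ, positive exactly on `[a,b]`, log-concave. -/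
def Good (f : ℤ → ℝ) (a b : ℤ) : Prop :=
  a ≤ b ∧ (∀ x, 0 ≤ f x) ∧ (∀ x, a ≤ x → x ≤ b → 0 < f x) ∧
    (∀ x, f x ≠ 0 → a ≤ x ∧ x ≤ b) ∧ ∀ i : ℤ, f (i - 1) * f (i + 1) ≤ f i ^ 2

namespace Good

variable {f : ℤ → ℝ} {a b : ℤ}

lemma nn (h : Good f a b) : ∀ x, 0 ≤ f x := h.2.1
lemma pos (h : Good f a b) : ∀ x, a ≤ x → x ≤ b → 0 < f x := h.2.2.1
lemma supp (h : Good f a b) : ∀ x, f x ≠ 0 → a ≤ x ∧ x ≤ b := h.2.2.2.1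
lemma lc (h : Good f a b) : ∀ i : ℤ, f (i - 1) * f (i + 1) ≤ f i ^ 2 := h.2.2.2.2
lemma le (h : Good f a b) : a ≤ b := h.1

lemma zero_of_lt (h : Good f a b) {x : ℤ} (hx : x < a) : f x = 0 := by
  by_contra hfx; exact absurd ((h.supp x hfx).1) (by omega)

lemma zero_of_gt (h : Good f a b) {x : ℤ} (hx : b < x) : f x = 0 := by
  by_contra hfx; exact absurd ((h.supp x hfx).2) (by omega)

private lemma L1_aux (h : Good f a b) : ∀ (d : ℕ) (x : ℤ), a ≤ x - 1 → x + d + 1 ≤ b →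
    f (x - 1) * (f (x + d + 1)) ≤ f x * f (x + d) := by
  intro d
  induction d with
  | zero =>
    intro x _ _
    have := h.lc x
    simpa [pow_two] using this
  | succ d ih =>
    intro x hx hxb
    have hih := ih x hx (by push_cast; omega)
    have hlc := h.lc (x + d + 1)
    have h1 : (0:ℝ) < f (x + d) := h.pos _ (by omega) (by push_cast at hxb ⊢; omega)
    have h2 : (0:ℝ) < f (x + d + 1) := h.pos _ (by omega) (by push_cast at hxb ⊢; omega)
    have e1 : (x + d + 1 : ℤ) - 1 = x + d := by omega
    have e2 : (x + (d+1:ℕ) : ℤ) = x + d + 1 := by push_cast; ring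
    have e3 : (x + (d+1:ℕ) + 1 : ℤ) = x + d + 1 + 1 := by push_cast; ring
    rw [e1] at hlc
    rw [e3, e2]
    nlinarith [h.nn (x-1), h.nn (x + d + 1 + 1), h.nn x]

/-- the key TP₂-type inequality. -/
lemma L1 (h : Good f a b) {x y : ℤ} (hxy : x ≤ y) :
    f (x - 1) * f (y + 1) ≤ f x * f y := by
  by_cases h1 : f (x - 1) = 0
  · rw [h1, zero_mul]; exact mul_nonneg (h.nn x) (h.nn y)
  by_cases h2 : f (y + 1) = 0
  · rw [h2, mul_zero]; exact mul_nonneg (h.nn x) (h.nn y)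
  obtain ⟨hxa, -⟩ := h.supp _ h1
  obtain ⟨-, hyb⟩ := h.supp _ h2
  have hd : ∃ d : ℕ, y = x + d := ⟨(y - x).toNat, by omega⟩
  obtain ⟨d, rfl⟩ := hd
  exact h.L1_aux d x hxa (by omega)

end Good

/-- convolution of finitely supported functions on ℤ, first factor supported in `[a,b]`. -/
noncomputable def rcv (f g : ℤ → ℝ) (a b : ℤ) (x : ℤ) : ℝ := ∑ y ∈ Finset.Icc a b, f y * g (x - y)

section rcvGood
variable {f g : ℤ → ℝ} {a b c d : ℤ}

lemma rcv_nn (hf : ∀ x, 0 ≤ f x) (hg : ∀ x, 0 ≤ g x) (x : ℤ) : 0 ≤ rcv f g a b x :=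
  Finset.sum_nonneg fun y _ => mul_nonneg (hf y) (hg _)

lemma rcv_pos (hf : Good f a b) (hg : Good g c d) {x : ℤ} (h1 : a + c ≤ x) (h2 : x ≤ b + d) :
    0 < rcv f g a b x := by
  have hcd := hg.le
  have hy : max a (x - d) ∈ Finset.Icc a b := by
    simp only [Finset.mem_Icc]
    constructor
    · exact le_max_left _ _
    · exact max_le hf.le (by omega)
  have hterm : 0 < f (max a (x - d)) * g (x - max a (x - d)) := by
    apply mul_pos
    · exact hf.pos _ (le_max_left _ _) (max_le hf.le (by omega))
    · rcases le_total a (x - d) with h | h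
      · rw [max_eq_right h]; exact hg.pos _ (by omega) (by omega)
      · rw [max_eq_left h]; exact hg.pos _ (by omega) (by omega)
  calc (0:ℝ) < f (max a (x-d)) * g (x - max a (x-d)) := hterm
    _ ≤ rcv f g a b x := Finset.single_le_sum
        (fun y _ => mul_nonneg (hf.nn y) (hg.nn _)) hy

lemma rcv_supp (hf : Good f a b) (hg : Good g c d) {x : ℤ} (hx : rcv f g a b x ≠ 0) :
    a + c ≤ x ∧ x ≤ b + d := by
  by_contra hcon
  apply hx
  apply Finset.sum_eq_zero
  intro y hy
  simp only [Finset.mem_Icc] at hy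
  by_cases hfy : f y = 0
  · rw [hfy, zero_mul]
  · have := hf.supp y hfy
    by_cases hgy : g (x - y) = 0
    · rw [hgy, mul_zero]
    · have := hg.supp _ hgy
      omega

/-- convolution sum can be recomputed over any interval containing `[a,b]`. -/
lemma rcv_eq_over (hf : Good f a b) {a' b' : ℤ} (h1 : a' ≤ a) (h2 : b ≤ b') (x : ℤ) :
    rcv f g a b x = ∑ y ∈ Finset.Icc a' b', f y * g (x - y) := by
  show (∑ y ∈ Finset.Icc a b, f y * g (x - y)) = _
  apply Finset.sum_subset (Finset.Icc_subset_Icc h1 h2)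
  intro y _ hy
  simp only [Finset.mem_Icc] at hy
  have : f y = 0 := by
    by_contra hfy
    have := hf.supp y hfy; omega
  rw [this, zero_mul]

lemma rcv_lc (hf : Good f a b) (hg : Good g c d) (n : ℤ) :
    rcv f g a b (n - 1) * rcv f g a b (n + 1) ≤ rcv f g a b n ^ 2 := by
  set T : Finset ℤ := Finset.Icc a (b+1) with hT
  have hreindex : ∀ w : ℤ, (∑ u ∈ Finset.Icc (a-1) b, f u * g (w - u))
      = ∑ v ∈ T, f (v - 1) * g (w + 1 - v) := by
    intro w
    rw [show Finset.Icc (a-1) b = Finset.image (fun v => v - 1) T by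
      ext z
      simp only [hT, Finset.mem_image, Finset.mem_Icc]
      constructor
      · intro hz; exact ⟨z + 1, by omega, by omega⟩
      · rintro ⟨w', hw, rfl⟩; omega]
    rw [Finset.sum_image (by intro p _ q _ h; simp only at h; omega)]
    apply Finset.sum_congr rfl
    intro v _; congr 2; omega
  have hX1 : rcv f g a b n = ∑ v ∈ T, f v * g (n - v) := rcv_eq_over hf le_rfl (by omega) n
  have hX2 : rcv f g a b n = ∑ v ∈ T, f (v - 1) * g (n + 1 - v) := by
    rw [rcv_eq_over hf (show a - 1 ≤ a by omega) le_rfl n, hreindex n]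
  have hX3 : rcv f g a b (n+1) = ∑ v ∈ T, f v * g (n + 1 - v) :=
    rcv_eq_over hf le_rfl (by omega) (n+1)
  have hX4 : rcv f g a b (n-1) = ∑ v ∈ T, f (v - 1) * g (n - v) := by
    rw [rcv_eq_over hf (show a - 1 ≤ a by omega) le_rfl (n-1), hreindex (n-1)]
    apply Finset.sum_congr rfl; intro v _; congr 2; omega
  set B : ℤ → ℤ → ℝ := fun v v' => g (n - v) * g (n + 1 - v') - g (n + 1 - v) * g (n - v')
    with hB
  set A : ℤ → ℤ → ℝ := fun v v' => f v * f (v' - 1) - f v' * f (v - 1) with hA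
  have key : ∀ v v', 0 ≤ A v v' * B v v' := by
    have hAB : ∀ v v' : ℤ, v ≤ v' → 0 ≤ A v v' ∧ 0 ≤ B v v' := by
      intro v v' hvv
      constructor
      · rcases eq_or_lt_of_le hvv with rfl | hlt
        · have hz : A v v = 0 := by simp only [hA]; ring
          rw [hz]
        · have hL := hf.L1 (x := v) (y := v' - 1) (by omega)
          have e : v' - 1 + 1 = v' := by omega
          rw [e] at hL
          simp only [hA]
          linarith
      · rcases eq_or_lt_of_le hvv with rfl | hlt
        · have hz : B v v = 0 := by simp only [hB]; ring
          rw [hz]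
        · have hL := hg.L1 (x := n + 1 - v') (y := n - v) (by omega)
          have e1 : n + 1 - v' - 1 = n - v' := by omega
          have e2 : n - v + 1 = n + 1 - v := by omega
          rw [e1, e2] at hL
          simp only [hB]
          linarith
    intro v v'
    rcases le_total v v' with h | h
    · obtain ⟨h1, h2⟩ := hAB v v' h
      exact mul_nonneg h1 h2
    · obtain ⟨h1, h2⟩ := hAB v' v h
      have eA : A v v' = - A v' v := by simp only [hA]; ring
      have eB : B v v' = - B v' v := by simp only [hB]; ring
      rw [eA, eB]
      simpa using mul_nonneg h1 h2
  set F : ℤ → ℤ → ℝ := fun v v' => f v * f (v' - 1) * B v v' with hF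
  set S1 := ∑ v ∈ T, f v * g (n - v) with hS1
  set S2 := ∑ v ∈ T, f (v - 1) * g (n + 1 - v) with hS2
  set S3 := ∑ v ∈ T, f v * g (n + 1 - v) with hS3
  set S4 := ∑ v ∈ T, f (v - 1) * g (n - v) with hS4
  have expand : S1 * S2 - S3 * S4 = ∑ v ∈ T, ∑ v' ∈ T, F v v' := by
    rw [hS1, hS2, hS3, hS4, Finset.sum_mul_sum, Finset.sum_mul_sum,
      ← Finset.sum_sub_distrib]
    apply Finset.sum_congr rfl; intro v _
    rw [← Finset.sum_sub_distrib]
    apply Finset.sum_congr rfl; intro v' _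
    simp only [hF, hB]; ring
  have comm : (∑ v ∈ T, ∑ v' ∈ T, F v v') = ∑ v ∈ T, ∑ v' ∈ T, F v' v :=
    Finset.sum_comm
  have sum2 : (∑ v ∈ T, ∑ v' ∈ T, F v v') + (∑ v ∈ T, ∑ v' ∈ T, F v' v)
      = ∑ v ∈ T, ∑ v' ∈ T, (F v v' + F v' v) := by
    rw [← Finset.sum_add_distrib]
    exact Finset.sum_congr rfl fun v _ => (Finset.sum_add_distrib).symm
  have key2 : ∀ v v' : ℤ, F v v' + F v' v = A v v' * B v v' := by
    intro v v'; simp only [hF, hA, hB]; ring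
  have hnn : 0 ≤ ∑ v ∈ T, ∑ v' ∈ T, (F v v' + F v' v) := by
    apply Finset.sum_nonneg; intro v _
    apply Finset.sum_nonneg; intro v' _
    rw [key2 v v']; exact key v v'
  have h2 : 0 ≤ (S1 * S2 - S3 * S4) + (S1 * S2 - S3 * S4) := by
    rw [expand]
    nth_rewrite 2 [comm]
    rw [sum2]
    exact hnn
  have e1 : rcv f g a b n ^ 2 = S1 * S2 := by
    rw [pow_two]
    nth_rewrite 1 [hX1]
    rw [hX2]
  have e2 : rcv f g a b (n-1) * rcv f g a b (n+1) = S4 * S3 := by rw [hX4, hX3]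
  rw [e1, e2]
  nlinarith [h2]

lemma Good.rcv (hf : Good f a b) (hg : Good g c d) : Good (rcv f g a b) (a+c) (b+d) := by
  refine ⟨by have := hf.le; have := hg.le; omega,
    rcv_nn hf.nn hg.nn, fun x h1 h2 => rcv_pos hf hg h1 h2,
    fun x hx => rcv_supp hf hg hx, fun i => rcv_lc hf hg i⟩

end rcvGood

/-- a `Good` function is unimodal: there is a mode `m` with `f` nonincreasing to the right
of `m` and nondecreasing to the left (stated in "chain" form). -/
lemma Good.unimodal {f : ℤ → ℝ} {a b : ℤ} (h : Good f a b) :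
    ∃ m : ℤ, (∀ i j, m ≤ i → i ≤ j → f j ≤ f i) ∧ (∀ i j, j ≤ i → i ≤ m → f j ≤ f i) := by
  obtain ⟨m, hm, hmax⟩ := Finset.exists_max_image (Finset.Icc a b) f ⟨a, by
    simp [Finset.mem_Icc, h.le]⟩
  simp only [Finset.mem_Icc] at hm
  -- single step right
  have stepR : ∀ i, m ≤ i → f (i + 1) ≤ f i := by
    intro i hi
    by_cases hz : f (i+1) = 0
    · rw [hz]; exact h.nn i
    obtain ⟨hi1a, hi1b⟩ := h.supp _ hz
    by_contra hcon
    push_neg at hcon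
    -- f i < f (i+1), i + 1 ≤ b
    rcases eq_or_lt_of_le hi with rfl | hmi
    · exact absurd (hmax (m+1) (by simp only [Finset.mem_Icc]; omega)) (by linarith)
    · -- m < i
      have hL := h.L1 (x := m + 1) (y := i) (by omega)
      have e : m + 1 - 1 = m := by omega
      rw [e] at hL
      have hfi : 0 < f i := h.pos i (by omega) (by omega)
      have hfi1 : 0 < f (i+1) := h.pos _ (by omega) (by omega)
      have hfm : 0 < f m := h.pos m (by omega) (by omega)
      have hm1 : f (m+1) ≤ f m := hmax (m+1) (by simp [Finset.mem_Icc]; omega)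
      nlinarith
  have stepL : ∀ i, i ≤ m → f (i - 1) ≤ f i := by
    intro i hi
    by_cases hz : f (i-1) = 0
    · rw [hz]; exact h.nn i
    obtain ⟨hi1a, hi1b⟩ := h.supp _ hz
    by_contra hcon
    push_neg at hcon
    rcases eq_or_lt_of_le hi with rfl | hmi
    · exact absurd (hmax (i-1) (by simp only [Finset.mem_Icc]; omega)) (by linarith)
    · have hL := h.L1 (x := i) (y := m - 1) (by omega)
      have e : m - 1 + 1 = m := by omega
      rw [e] at hL
      have hfi : 0 < f i := h.pos i (by omega) (by omega)
      have hfi1 : 0 < f (i-1) := h.pos _ (by omega) (by omega)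
      have hfm : 0 < f m := h.pos m (by omega) (by omega)
      have hm1 : f (m-1) ≤ f m := hmax (m-1) (by simp [Finset.mem_Icc]; omega)
      nlinarith
  refine ⟨m, ?_, ?_⟩
  · intro i j hmi hij
    have : ∀ d : ℕ, f (i + d) ≤ f i := by
      intro d
      induction d with
      | zero => simp
      | succ d ih =>
        have h1 := stepR (i + d) (by omega)
        have e : i + ((d + 1 : ℕ) : ℤ) = i + (d:ℤ) + 1 := by push_cast; ring
        rw [e]
        exact le_trans h1 ih
    have hd : j = i + ((j - i).toNat : ℕ) := by omega
    rw [hd]; exact this _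
  · intro i j hji him
    have : ∀ d : ℕ, f (i - d) ≤ f i := by
      intro d
      induction d with
      | zero => simp
      | succ d ih =>
        have h1 := stepL (i - d) (by omega)
        have e : i - ((d + 1 : ℕ) : ℤ) = i - (d:ℤ) - 1 := by push_cast; ring
        rw [e]
        exact le_trans h1 ih
    have hd : j = i - ((i - j).toNat : ℕ) := by omega
    rw [hd]; exact this _

/-- The core "window" lemma: a capped weight average against a unimodal function is
dominated by the value of a suitably placed extremal pattern. -/
lemma core_window (g : ℤ → ℝ) (gnn : ∀ x, 0 ≤ g x) (m : ℤ)
    (hr : ∀ i j, m ≤ i → i ≤ j → g j ≤ g i) (hl : ∀ i j, j ≤ i → i ≤ m → g j ≤ g i)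
    (β : ℝ) (k : ℤ) (hk1 : 1 ≤ k) (hβ0 : 0 < β) :
    ∃ a e : ℤ, (e = a ∨ e = a + k) ∧
      ∀ (w : ℤ → ℝ) (S : Finset ℤ), (∀ t, 0 ≤ w t) → (∀ t, w t ≤ β) →
        (∑ t ∈ S, w t = 1) →
      ∑ t ∈ S, w t * g t ≤
        β * (∑ j ∈ (Finset.Icc a (a + k)).erase e, g j) + (1 - β * k) * g e := by
  classical
  -- find the window
  set P : Finset ℤ := (Finset.Icc (m - k) m).filter (fun a => g (a + k + 1) ≤ g a) with hP
  have hPne : P.Nonempty := ⟨m, by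
    simp only [hP, Finset.mem_filter, Finset.mem_Icc]
    exact ⟨⟨by omega, le_rfl⟩, hr m (m + k + 1) le_rfl (by omega)⟩⟩
  set a := P.min' hPne with ha
  have haP : a ∈ P := P.min'_mem hPne
  simp only [hP, Finset.mem_filter, Finset.mem_Icc] at haP
  obtain ⟨⟨ha1, ha2⟩, hC1⟩ := haP
  have hC2 : g (a - 1) ≤ g (a + k) := by
    rcases eq_or_lt_of_le ha1 with heq | hlt
    · -- a = m - k ; a - 1 < m
      have : g (a-1) ≤ g m := hl m (a-1) (by omega) le_rfl
      have e : a + k = m := by omega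
      rw [e]; exact this
    · -- a - 1 ∈ Icc (m-k) m and not in P
      have hnot : a - 1 ∉ P := by
        intro hmem
        have := P.min'_le _ hmem
        omega
      simp only [hP, Finset.mem_filter, Finset.mem_Icc] at hnot
      push_neg at hnot
      have := hnot ⟨by omega, by omega⟩
      have e : a - 1 + k + 1 = a + k := by omega
      rw [e] at this
      linarith
  -- inside and outside bounds
  have hin : ∀ j, a ≤ j → j ≤ a + k → min (g a) (g (a + k)) ≤ g j := by
    intro j hj1 hj2
    rcases le_total j m with hjm | hjm
    · exact le_trans (min_le_left _ _) (hl j a hj1 hjm)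
    · exact le_trans (min_le_right _ _) (hr j (a+k) hjm hj2)
  have hout : ∀ j, j < a ∨ a + k < j → g j ≤ min (g a) (g (a + k)) := by
    intro j hj
    rcases hj with hj | hj
    · have h1 : g j ≤ g (a - 1) := hl (a-1) j (by omega) (by omega)
      have h2 : g (a-1) ≤ g a := hl a (a-1) (by omega) ha2
      exact le_min (le_trans h1 h2) (le_trans h1 hC2)
    · have h1 : g j ≤ g (a + k + 1) := hr (a+k+1) j (by omega) (by omega)
      have h2 : g (a+k+1) ≤ g (a+k) := hr (a+k) (a+k+1) (by omega) (by omega)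
      exact le_min (le_trans h1 hC1) (le_trans h1 h2)
  set e := if g a ≤ g (a + k) then a else a + k with he
  have hemin : g e = min (g a) (g (a+k)) := by
    rw [he]
    by_cases hc : g a ≤ g (a + k)
    · rw [if_pos hc, min_eq_left hc]
    · rw [if_neg hc, min_eq_right (le_of_not_ge hc)]
  have hee : e = a ∨ e = a + k := by
    rw [he]
    by_cases hc : g a ≤ g (a + k)
    · left; rw [if_pos hc]
    · right; rw [if_neg hc]
  refine ⟨a, e, hee, ?_⟩
  intro w S hwnn hwcap hwsum
  set W : Finset ℤ := (Finset.Icc a (a + k)).erase e with hW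
  have heIcc : e ∈ Finset.Icc a (a + k) := by
    rw [Finset.mem_Icc]; rcases hee with h | h <;> omega
  have hWcard : W.card = k.toNat := by
    rw [hW, Finset.card_erase_of_mem heIcc, Int.card_Icc]
    omega
  have hinW : ∀ j ∈ W, g e ≤ g j := by
    intro j hj
    rw [hW, Finset.mem_erase, Finset.mem_Icc] at hj
    rw [hemin]; exact hin j hj.2.1 hj.2.2
  have houtW : ∀ j ∉ W, g j ≤ g e := by
    intro j hj
    rw [hW, Finset.mem_erase, Finset.mem_Icc] at hj
    push_neg at hj
    by_cases hje : j = e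
    · rw [hje]
    · have := hj hje
      rw [hemin]
      apply hout
      omega
  -- the estimate
  have split : ∑ t ∈ S, w t * g t = ∑ t ∈ S ∩ W, w t * g t + ∑ t ∈ S \ W, w t * g t :=
    (Finset.sum_inter_add_sum_sdiff S W _).symm
  have splitw : ∑ t ∈ S ∩ W, w t + ∑ t ∈ S \ W, w t = 1 := by
    rw [Finset.sum_inter_add_sum_sdiff]; exact hwsum
  have bound1 : ∑ t ∈ S \ W, w t * g t ≤ (∑ t ∈ S \ W, w t) * g e := by
    rw [Finset.sum_mul]
    apply Finset.sum_le_sum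
    intro t ht
    rw [Finset.mem_sdiff] at ht
    exact mul_le_mul_of_nonneg_left (houtW t ht.2) (hwnn t)
  have bound2a : ∑ t ∈ S ∩ W, w t * (g t - g e) ≤ ∑ t ∈ S ∩ W, β * (g t - g e) := by
    apply Finset.sum_le_sum
    intro t ht
    have hge : 0 ≤ g t - g e := by
      have := hinW t (Finset.mem_of_mem_inter_right ht); linarith
    exact mul_le_mul_of_nonneg_right (hwcap t) hge
  have bound2b : ∑ t ∈ S ∩ W, β * (g t - g e) ≤ ∑ t ∈ W, β * (g t - g e) := by
    apply Finset.sum_le_sum_of_subset_of_nonneg Finset.inter_subset_right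
    intro t ht _
    have hge : 0 ≤ g t - g e := by have := hinW t ht; linarith
    exact mul_nonneg hβ0.le hge
  have e3 : ∑ t ∈ S ∩ W, w t * g t
      = (∑ t ∈ S ∩ W, w t * (g t - g e)) + (∑ t ∈ S ∩ W, w t) * g e := by
    rw [Finset.sum_mul, ← Finset.sum_add_distrib]
    exact Finset.sum_congr rfl fun t _ => by ring
  have hcast : ((k.toNat : ℕ) : ℝ) = (k : ℝ) := by
    exact_mod_cast congrArg (Int.cast : ℤ → ℝ) (Int.toNat_of_nonneg (by omega))
  have e4 : ∑ t ∈ W, β * (g t - g e) = β * (∑ j ∈ W, g j) - β * (k:ℝ) * g e := by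
    have : ∑ t ∈ W, β * (g t - g e) = (∑ t ∈ W, β * g t) - ∑ t ∈ W, β * g e := by
      rw [← Finset.sum_sub_distrib]
      exact Finset.sum_congr rfl fun t _ => by ring
    rw [this, Finset.sum_const, hWcard, ← Finset.mul_sum, nsmul_eq_mul, hcast]
    ring
  have final : ∑ t ∈ S, w t * g t ≤ β * (∑ j ∈ W, g j) + (1 - β * k) * g e := by
    have c1 : (∑ t ∈ S ∩ W, w t) * g e + (∑ t ∈ S \ W, w t) * g e = g e := by
      rw [← add_mul, splitw, one_mul]
    calc ∑ t ∈ S, w t * g t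
        = ∑ t ∈ S ∩ W, w t * g t + ∑ t ∈ S \ W, w t * g t := split
      _ ≤ ∑ t ∈ S ∩ W, w t * g t + (∑ t ∈ S \ W, w t) * g e := by linarith [bound1]
      _ = (∑ t ∈ S ∩ W, w t * (g t - g e)) + g e := by rw [e3]; linarith [c1]
      _ ≤ (∑ t ∈ W, β * (g t - g e)) + g e := by linarith [bound2a, bound2b]
      _ = β * (∑ j ∈ W, g j) + (1 - β * k) * g e := by rw [e4]; ring
  exact final

/-- the standard extremal pattern function on ℤ. -/
noncomputable def nuF (α : ℝ) : ℤ → ℝ := fun x =>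
  if 0 ≤ x ∧ x < (⌊α⁻¹⌋₊ : ℤ) then α
  else if x = (⌊α⁻¹⌋₊ : ℤ) then 1 - α * (⌊α⁻¹⌋₊ : ℝ) else 0

lemma nuF_val_in {α : ℝ} {x : ℤ} (h1 : 0 ≤ x) (h2 : x < (⌊α⁻¹⌋₊ : ℤ)) : nuF α x = α := by
  unfold nuF; rw [if_pos ⟨h1, h2⟩]

lemma nuF_val_m {α : ℝ} : nuF α (⌊α⁻¹⌋₊ : ℤ) = 1 - α * (⌊α⁻¹⌋₊ : ℝ) := by
  unfold nuF; rw [if_neg (by omega), if_pos rfl]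

lemma nuF_val_out {α : ℝ} {x : ℤ} (h : x < 0 ∨ (⌊α⁻¹⌋₊ : ℤ) < x) : nuF α x = 0 := by
  unfold nuF; rw [if_neg (by omega), if_neg (by omega)]

lemma nuF_m_pos {α : ℝ} (hα0 : 0 < α) (hα1 : α ≤ 1) : 1 ≤ ⌊α⁻¹⌋₊ :=
  Nat.le_floor (by exact_mod_cast (one_le_inv₀ hα0).2 hα1)

lemma nuF_mul_le {α : ℝ} (hα0 : 0 < α) : α * (⌊α⁻¹⌋₊ : ℝ) ≤ 1 := by
  have h1 : (⌊α⁻¹⌋₊ : ℝ) ≤ α⁻¹ := Nat.floor_le (by positivity)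
  have h2 : α * α⁻¹ = 1 := mul_inv_cancel₀ hα0.ne'
  nlinarith

lemma nuF_rem_lt {α : ℝ} (hα0 : 0 < α) : 1 - α * (⌊α⁻¹⌋₊ : ℝ) < α := by
  have h2 : α⁻¹ < (⌊α⁻¹⌋₊ : ℝ) + 1 := Nat.lt_floor_add_one _
  have h3 : α * α⁻¹ = 1 := mul_inv_cancel₀ hα0.ne'
  nlinarith

lemma nuF_nn {α : ℝ} (hα0 : 0 < α) : ∀ x, 0 ≤ nuF α x := by
  intro x
  unfold nuF
  split
  · exact hα0.le
  split
  · linarith [nuF_mul_le hα0]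
  · exact le_rfl

lemma nuF_cap {α : ℝ} (hα0 : 0 < α) : ∀ x, nuF α x ≤ α := by
  intro x
  unfold nuF
  split
  · exact le_rfl
  split
  · linarith [nuF_rem_lt hα0]
  · exact hα0.le

lemma nuF_supp {α : ℝ} : ∀ x, nuF α x ≠ 0 → 0 ≤ x ∧ x ≤ (⌊α⁻¹⌋₊ : ℤ) := by
  intro x hx
  unfold nuF at hx
  split at hx
  · omega
  split at hx
  · omega
  · exact absurd rfl hx

lemma nuF_sum {α : ℝ} (hα0 : 0 < α) (hα1 : α ≤ 1) :
    ∑ x ∈ Finset.Icc (0:ℤ) (⌊α⁻¹⌋₊ : ℤ), nuF α x = 1 := by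
  have hm := nuF_m_pos hα0 hα1
  have hsplit : Finset.Icc (0:ℤ) (⌊α⁻¹⌋₊ : ℤ)
      = insert ((⌊α⁻¹⌋₊ : ℤ)) (Finset.Icc (0:ℤ) ((⌊α⁻¹⌋₊ : ℤ) - 1)) := by
    ext z; simp only [Finset.mem_insert, Finset.mem_Icc]; omega
  rw [hsplit, Finset.sum_insert (by simp only [Finset.mem_Icc]; omega), nuF_val_m]
  have h2 : ∑ x ∈ Finset.Icc (0:ℤ) ((⌊α⁻¹⌋₊ : ℤ) - 1), nuF α x
      = (⌊α⁻¹⌋₊ : ℝ) * α := by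
    rw [Finset.sum_congr rfl
      (fun x hx => nuF_val_in (by simp only [Finset.mem_Icc] at hx; omega)
        (by simp only [Finset.mem_Icc] at hx; omega)),
      Finset.sum_const, Int.card_Icc, nsmul_eq_mul]
    congr 1
    have : ((⌊α⁻¹⌋₊ : ℤ) - 1 + 1 - 0).toNat = ⌊α⁻¹⌋₊ := by omega
    rw [this]
  rw [h2]
  ring

lemma nuF_lc {α : ℝ} (hα0 : 0 < α) : ∀ i : ℤ, nuF α (i-1) * nuF α (i+1) ≤ nuF α i ^ 2 := by
  intro i
  by_cases h1 : nuF α (i-1) = 0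
  · rw [h1, zero_mul]; exact sq_nonneg _
  by_cases h2 : nuF α (i+1) = 0
  · rw [h2, mul_zero]; exact sq_nonneg _
  have s1 := nuF_supp (α := α) _ h1
  have s2 := nuF_supp (α := α) _ h2
  have hi : nuF α i = α := nuF_val_in (by omega) (by omega)
  rw [hi]
  calc nuF α (i-1) * nuF α (i+1) ≤ α * α :=
    mul_le_mul (nuF_cap hα0 _) (nuF_cap hα0 _) (nuF_nn hα0 _) hα0.le
    _ = α ^ 2 := (pow_two α).symm

lemma nuF_good {α : ℝ} (hα0 : 0 < α) (hα1 : α ≤ 1) :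
    ∃ b : ℤ, 0 ≤ b ∧ b ≤ (⌊α⁻¹⌋₊ : ℤ) ∧ Good (nuF α) 0 b := by
  have hm := nuF_m_pos hα0 hα1
  have hrem0 : 0 ≤ 1 - α * (⌊α⁻¹⌋₊ : ℝ) := by linarith [nuF_mul_le hα0]
  by_cases hr : 1 - α * (⌊α⁻¹⌋₊ : ℝ) = 0
  · refine ⟨(⌊α⁻¹⌋₊ : ℤ) - 1, by omega, by omega, by omega, nuF_nn hα0, ?_, ?_, nuF_lc hα0⟩
    · intro x hx1 hx2
      rw [nuF_val_in hx1 (by omega)]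
      exact hα0
    · intro x hx
      obtain ⟨hx1, hx2⟩ := nuF_supp x hx
      refine ⟨hx1, ?_⟩
      rcases eq_or_lt_of_le hx2 with heq | hlt
      · exact absurd (heq ▸ nuF_val_m.trans hr) hx
      · omega
  · refine ⟨(⌊α⁻¹⌋₊ : ℤ), by omega, le_rfl, by omega, nuF_nn hα0, ?_,
      fun x hx => nuF_supp x hx, nuF_lc hα0⟩
    intro x hx1 hx2
    rcases eq_or_lt_of_le hx2 with heq | hlt
    · rw [heq, nuF_val_m]
      exact lt_of_le_of_ne hrem0 (Ne.symm hr)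
    · rw [nuF_val_in hx1 hlt]
      exact hα0
open MeasureTheory
open scoped ENNReal



/-- convolution at the level of ENNReal-valued atom functions. -/
noncomputable def cvE (f g : ℤ → ℝ≥0∞) (x : ℤ) : ℝ≥0∞ := ∑' y : ℤ, g (x - y) * f y

/-- binary convolution of measures on ℤ. -/
noncomputable def mcv (μ ν : Measure ℤ) : Measure ℤ :=
  Measure.map (fun p : ℤ × ℤ => p.1 + p.2) (μ.prod ν)

section atoms

-- atoms of nu
lemma nu_atom {α : ℝ} (x : ℤ) : nu α {x} = ENNReal.ofReal (nuF α x) := by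
  have hsd : ∀ (c : ℝ≥0∞) (a : ℤ), (c • Measure.dirac a) {x} = if a = x then c else 0 := by
    intro c a
    rw [Measure.smul_apply, Measure.dirac_apply]
    by_cases h : a = x
    · simp [Set.indicator_apply, h]
    · simp [Set.indicator_apply, h]
  unfold nu nuF
  rw [Measure.add_apply, Measure.finset_sum_apply,
    Finset.sum_congr rfl fun i _ => hsd _ _, hsd]
  by_cases h1 : 0 ≤ x ∧ x < (⌊α⁻¹⌋₊ : ℤ)
  · rw [if_pos h1, if_neg (by omega), add_zero, Finset.sum_eq_single x.toNat]
    · rw [if_pos (by omega)]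
    · intro i _ hne
      rw [if_neg (by omega)]
    · intro hmem
      exact absurd (Finset.mem_range.mpr (by omega)) hmem
  · rw [if_neg h1, Finset.sum_eq_zero (fun i hi => by
      rw [Finset.mem_range] at hi
      rw [if_neg (by omega)]), zero_add]
    by_cases hx : x = (⌊α⁻¹⌋₊ : ℤ)
    · rw [if_pos (by omega), if_pos hx]
    · rw [if_neg (by omega), if_neg hx, ENNReal.ofReal_zero]


lemma nu_isProb {α : ℝ} (hα0 : 0 < α) (hα1 : α ≤ 1) : IsProbabilityMeasure (nu α) := by
  constructor
  unfold nu
  have hfl : (⌊α⁻¹⌋₊ : ℝ) ≤ α⁻¹ := Nat.floor_le (by positivity)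
  have hmul : α * (⌊α⁻¹⌋₊ : ℝ) ≤ 1 := by
    have h2 : α * α⁻¹ = 1 := mul_inv_cancel₀ hα0.ne'
    nlinarith
  rw [Measure.add_apply, Measure.finset_sum_apply]
  simp only [Measure.smul_apply, measure_univ, smul_eq_mul, mul_one]
  rw [Finset.sum_const, Finset.card_range, nsmul_eq_mul]
  rw [show ((⌊α⁻¹⌋₊ : ℕ) : ℝ≥0∞) = ENNReal.ofReal ((⌊α⁻¹⌋₊ : ℕ) : ℝ) by
    rw [ENNReal.ofReal_natCast]]
  rw [← ENNReal.ofReal_mul (by positivity), ← ENNReal.ofReal_add (by nlinarith) (by nlinarith)]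
  rw [show (⌊α⁻¹⌋₊ : ℝ) * α + (1 - α * (⌊α⁻¹⌋₊ : ℝ)) = 1 by ring, ENNReal.ofReal_one]

section cvElemmas

lemma cvE_comm (f g : ℤ → ℝ≥0∞) (x : ℤ) : cvE f g x = cvE g f x := by
  unfold cvE
  rw [← (Equiv.subLeft x).tsum_eq (fun y => f (x - y) * g y)]
  apply tsum_congr
  intro y
  simp only [Equiv.subLeft_apply]
  rw [show x - (x - y) = y by omega, mul_comm]

lemma cvE_assoc (f g h : ℤ → ℝ≥0∞) (x : ℤ) : cvE f (cvE g h) x = cvE (cvE f g) h x := by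
  unfold cvE
  have lhs_eq : ∑' y : ℤ, (∑' z : ℤ, h (x - y - z) * g z) * f y
      = ∑' y : ℤ, ∑' z : ℤ, h (x - y - z) * g z * f y := by
    exact tsum_congr fun y => by rw [ENNReal.tsum_mul_right]
  have rhs_eq : ∑' u : ℤ, h (x - u) * ∑' y : ℤ, g (u - y) * f y
      = ∑' u : ℤ, ∑' y : ℤ, h (x - u) * (g (u - y) * f y) := by
    exact tsum_congr fun u => by rw [ENNReal.tsum_mul_left]
  rw [lhs_eq, rhs_eq]
  rw [ENNReal.tsum_comm (f := fun u y => h (x - u) * (g (u - y) * f y))]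
  apply tsum_congr; intro y
  rw [← (Equiv.subRight y).tsum_eq (fun z => h (x - y - z) * g z * f y)]
  apply tsum_congr; intro u
  simp only [Equiv.subRight_apply]
  rw [show x - y - (u - y) = x - u by omega]; ring

lemma cvE_delta (f : ℤ → ℝ≥0∞) (d : ℤ → ℝ≥0∞) (hd : ∀ x, d x = if x = 0 then 1 else 0)
    (x : ℤ) : cvE f d x = f x := by
  unfold cvE
  rw [tsum_eq_single x]
  · rw [hd, if_pos (by omega), one_mul]
  · intro y hy
    rw [hd, if_neg (by omega), zero_mul]

lemma cvE_delta' (f : ℤ → ℝ≥0∞) (d : ℤ → ℝ≥0∞) (hd : ∀ x, d x = if x = 0 then 1 else 0)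
    (x : ℤ) : cvE d f x = f x := by
  rw [cvE_comm]; exact cvE_delta f d hd x

end cvElemmas


section measures

lemma mcv_atom (μ ν : Measure ℤ) [SigmaFinite ν] (x : ℤ) :
    (mcv μ ν) {x} = cvE (fun y => μ {y}) (fun y => ν {y}) x := by
  unfold mcv cvE
  rw [Measure.map_apply Measurable.of_discrete (MeasurableSet.singleton x)]
  rw [Measure.prod_apply MeasurableSet.of_discrete]
  have hpre : ∀ y : ℤ, (Prod.mk y ⁻¹' ((fun p : ℤ × ℤ => p.1 + p.2) ⁻¹' {x})) = {x - y} := by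
    intro y
    ext z
    simp only [Set.mem_preimage, Set.mem_singleton_iff]
    omega
  rw [lintegral_congr fun y => by rw [hpre y]]
  exact lintegral_countable' _

instance mcv_isProb (μ ν : Measure ℤ) [IsProbabilityMeasure μ] [IsProbabilityMeasure ν] :
    IsProbabilityMeasure (mcv μ ν) :=
  Measure.isProbabilityMeasure_map (Measurable.of_discrete (f := fun p : ℤ × ℤ => p.1 + p.2)).aemeasurable

lemma lawSum_nil (μ : Fin 0 → Measure ℤ) (x : ℤ) :
    lawSum μ {x} = if x = 0 then 1 else 0 := by
  unfold lawSum
  rw [Measure.pi_of_empty μ (fun i => i.elim0)]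
  rw [Measure.map_dirac' Measurable.of_discrete]
  rw [show (∑ i : Fin 0, (fun i : Fin 0 => i.elim0 (α := ℤ)) i) = 0 from rfl]
  rw [Measure.dirac_apply]
  by_cases h : x = 0
  · subst h; simp [Set.indicator_apply]
  · simp [Set.indicator_apply, h, Ne.symm h]

lemma lawSum_cons {n : ℕ} (μ0 : Measure ℤ) (μs : Fin n → Measure ℤ)
    [IsProbabilityMeasure μ0] [∀ i, IsProbabilityMeasure (μs i)] (x : ℤ) :
    lawSum (Fin.cons μ0 μs) {x}
      = cvE (fun y => μ0 {y}) (fun y => lawSum μs {y}) x := by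
  have hsf : ∀ i : Fin (n+1), SigmaFinite ((Fin.cons μ0 μs : Fin (n+1) → Measure ℤ) i) := by
    intro i
    refine Fin.cases ?_ ?_ i
    · rw [Fin.cons_zero]; infer_instance
    · intro j; rw [Fin.cons_succ]; infer_instance
  haveI := hsf
  have mp := measurePreserving_piFinSuccAbove (fun i => (Fin.cons μ0 μs : Fin (n+1) → Measure ℤ) i) 0
  have hfam : (fun j : Fin n => (Fin.cons μ0 μs : Fin (n+1) → Measure ℤ) ((0 : Fin (n+1)).succAbove j)) = μs := by
    funext j
    rw [Fin.succAbove_zero, Fin.cons_succ]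
  rw [Fin.cons_zero, hfam] at mp
  have hpi : Measure.pi (Fin.cons μ0 μs)
      = Measure.map (MeasurableEquiv.piFinSuccAbove (fun _ => ℤ) 0).symm (μ0.prod (Measure.pi μs)) :=
    (mp.symm _).map_eq.symm
  unfold lawSum
  rw [hpi, Measure.map_map Measurable.of_discrete Measurable.of_discrete]
  have hcomp : ((fun g : Fin (n+1) → ℤ => ∑ i, g i) ∘ (MeasurableEquiv.piFinSuccAbove (fun _ => ℤ) 0).symm)
      = fun p : ℤ × (Fin n → ℤ) => p.1 + ∑ i, p.2 i := by
    funext p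
    simp only [Function.comp_apply, MeasurableEquiv.piFinSuccAbove_symm_apply,
      Fin.insertNthEquiv_zero, Fin.consEquiv_apply]
    exact Fin.sum_cons p.1 p.2
  rw [hcomp]
  rw [Measure.map_apply Measurable.of_discrete (MeasurableSet.singleton x)]
  rw [Measure.prod_apply MeasurableSet.of_discrete]
  have hpre : ∀ y : ℤ, (Prod.mk y ⁻¹' ((fun p : ℤ × (Fin n → ℤ) => p.1 + ∑ i, p.2 i) ⁻¹' {x}))
      = (fun g : Fin n → ℤ => ∑ i, g i) ⁻¹' {x - y} := by
    intro y
    ext g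
    simp only [Set.mem_preimage, Set.mem_singleton_iff]
    omega
  rw [lintegral_congr fun y => by
    rw [hpre y, ← Measure.map_apply Measurable.of_discrete (MeasurableSet.singleton (x - y))]]
  exact lintegral_countable' _

instance lawSum_isProb {n : ℕ} (μ : Fin n → Measure ℤ) [∀ i, IsProbabilityMeasure (μ i)] :
    IsProbabilityMeasure (lawSum μ) :=
  Measure.isProbabilityMeasure_map (Measurable.of_discrete).aemeasurable

end measures

end atoms

section Bridge
open Finset MeasureTheory
open scoped ENNReal

lemma Good.shift {f : ℤ → ℝ} {a b : ℤ} (h : Good f a b) (i : ℤ) :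
    Good (fun x => f (x - i)) (a + i) (b + i) := by
  obtain ⟨hab, hnn, hpos, hsupp, hlc⟩ := h
  refine ⟨by omega, fun x => hnn _, fun x h1 h2 => hpos _ (by omega) (by omega),
    fun x hx => by have := hsupp _ hx; omega, fun j => ?_⟩
  have e1 : j - 1 - i = (j - i) - 1 := by omega
  have e2 : j + 1 - i = (j - i) + 1 := by omega
  simp only [e1, e2]
  exact hlc (j - i)

lemma Good.reflect {f : ℤ → ℝ} {a b : ℤ} (h : Good f a b) (c : ℤ) :
    Good (fun x => f (c - x)) (c - b) (c - a) := by
  obtain ⟨hab, hnn, hpos, hsupp, hlc⟩ := h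
  refine ⟨by omega, fun x => hnn _, fun x h1 h2 => hpos _ (by omega) (by omega),
    fun x hx => by have := hsupp _ hx; omega, fun j => ?_⟩
  have e1 : c - (j - 1) = (c - j) + 1 := by omega
  have e2 : c - (j + 1) = (c - j) - 1 := by omega
  simp only [e1, e2]
  rw [mul_comm]
  exact hlc (c - j)

/-- real atom function of a measure on ℤ. -/
noncomputable def atR (μ : MeasureTheory.Measure ℤ) : ℤ → ℝ := fun x => (μ {x}).toReal

lemma concQ_eq_iSup_atR (μ : MeasureTheory.Measure ℤ) : concQ μ = ⨆ x, atR μ x := rfl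

lemma concQ_congr {μ ν : MeasureTheory.Measure ℤ} (h : ∀ x : ℤ, μ {x} = ν {x}) :
    concQ μ = concQ ν := by
  unfold concQ
  exact congrArg _ (funext fun x => by rw [h x])

lemma map_add_atom (ν : MeasureTheory.Measure ℤ) (i x : ℤ) :
    (MeasureTheory.Measure.map (· + i) ν) {x} = ν {x - i} := by
  rw [Measure.map_apply Measurable.of_discrete (MeasurableSet.singleton x)]
  congr 1
  ext y
  simp only [Set.mem_preimage, Set.mem_singleton_iff]
  omega

lemma map_neg_atom (ν : MeasureTheory.Measure ℤ) (i x : ℤ) :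
    (MeasureTheory.Measure.map (fun y : ℤ => -y + i) ν) {x} = ν {i - x} := by
  rw [Measure.map_apply Measurable.of_discrete (MeasurableSet.singleton x)]
  congr 1
  ext y
  simp only [Set.mem_preimage, Set.mem_singleton_iff]
  omega

lemma SE_prob {γ : ℝ} {μ : MeasureTheory.Measure ℤ} (h : StandardExtremal γ μ)
    (h0 : 0 < γ) (h1 : γ ≤ 1) : IsProbabilityMeasure μ := by
  haveI := nu_isProb h0 h1
  obtain ⟨i, h | h⟩ := h <;> subst h <;>
    exact Measure.isProbabilityMeasure_map Measurable.of_discrete.aemeasurable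

lemma SE_atom {γ : ℝ} {μ : MeasureTheory.Measure ℤ} (h : StandardExtremal γ μ) :
    ∃ i : ℤ, (∀ x, μ {x} = ENNReal.ofReal (nuF γ (x - i))) ∨
             (∀ x, μ {x} = ENNReal.ofReal (nuF γ (i - x))) := by
  obtain ⟨i, h | h⟩ := h
  · exact ⟨i, Or.inl fun x => by rw [h, map_add_atom, nu_atom]⟩
  · exact ⟨i, Or.inr fun x => by rw [h, map_neg_atom, nu_atom]⟩

lemma SE_good {γ : ℝ} {μ : MeasureTheory.Measure ℤ} (h : StandardExtremal γ μ)
    (h0 : 0 < γ) (h1 : γ ≤ 1) : ∃ a b : ℤ, Good (atR μ) a b := by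
  obtain ⟨i, hc | hc⟩ := SE_atom h <;> obtain ⟨b0, hb0, hb1, hgood⟩ := nuF_good h0 h1
  · refine ⟨i, b0 + i, ?_⟩
    have he : atR μ = fun x => nuF γ (x - i) := funext fun x => by
      rw [atR]; rw [hc x, ENNReal.toReal_ofReal (nuF_nn h0 _)]
    rw [he]
    simpa using hgood.shift i
  · refine ⟨i - b0, i, ?_⟩
    have he : atR μ = fun x => nuF γ (i - x) := funext fun x => by
      rw [atR]; rw [hc x, ENNReal.toReal_ofReal (nuF_nn h0 _)]
    rw [he]
    simpa using hgood.reflect i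

lemma SE_cap {γ : ℝ} {μ : MeasureTheory.Measure ℤ} (h : StandardExtremal γ μ)
    (h0 : 0 < γ) : ∀ y, atR μ y ≤ γ := by
  obtain ⟨i, hc | hc⟩ := SE_atom h <;> intro y <;>
    rw [atR] <;> rw [hc y, ENNReal.toReal_ofReal (nuF_nn h0 _)] <;> exact nuF_cap h0 _

lemma SE_weights {γ : ℝ} {μ : MeasureTheory.Measure ℤ} (h : StandardExtremal γ μ)
    (h0 : 0 < γ) (h1 : γ ≤ 1) :
    ∃ S : Finset ℤ, (∀ y ∉ S, μ {y} = 0) ∧ (∑ y ∈ S, atR μ y = 1) := by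
  obtain ⟨i, hc | hc⟩ := SE_atom h
  · refine ⟨Finset.Icc i (i + (⌊γ⁻¹⌋₊ : ℤ)), ?_, ?_⟩
    · intro y hy
      simp only [Finset.mem_Icc] at hy
      rw [hc y, nuF_val_out (by omega), ENNReal.ofReal_zero]
    · rw [show Finset.Icc i (i + (⌊γ⁻¹⌋₊:ℤ)) = Finset.image (· + i) (Finset.Icc 0 (⌊γ⁻¹⌋₊:ℤ)) by
        ext z
        simp only [Finset.mem_image, Finset.mem_Icc]
        constructor
        · intro hz; exact ⟨z - i, by omega, by omega⟩
        · rintro ⟨u, hu, rfl⟩; omega]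
      rw [Finset.sum_image (by intro p _ q _ hpq; simp only at hpq; omega)]
      rw [Finset.sum_congr rfl fun u hu => ?_]
      · exact nuF_sum h0 h1
      · rw [atR]; rw [hc (u + i), show u + i - i = u by omega,
          ENNReal.toReal_ofReal (nuF_nn h0 _)]
  · refine ⟨Finset.Icc (i - (⌊γ⁻¹⌋₊ : ℤ)) i, ?_, ?_⟩
    · intro y hy
      simp only [Finset.mem_Icc] at hy
      rw [hc y, nuF_val_out (by omega), ENNReal.ofReal_zero]
    · rw [show Finset.Icc (i - (⌊γ⁻¹⌋₊:ℤ)) i = Finset.image (fun u => i - u) (Finset.Icc 0 (⌊γ⁻¹⌋₊:ℤ)) by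
        ext z
        simp only [Finset.mem_image, Finset.mem_Icc]
        constructor
        · intro hz; exact ⟨i - z, by omega, by omega⟩
        · rintro ⟨u, hu, rfl⟩; omega]
      rw [Finset.sum_image (by intro p _ q _ hpq; simp only at hpq; omega)]
      rw [Finset.sum_congr rfl fun u hu => ?_]
      · exact nuF_sum h0 h1
      · rw [atR]; rw [hc (i - u), show i - (i - u) = u by omega,
          ENNReal.toReal_ofReal (nuF_nn h0 _)]

end Bridge

section Bridge2
open Finset MeasureTheory
open scoped ENNReal

lemma cvE_atoms_toReal (μ ρ : MeasureTheory.Measure ℤ) [IsFiniteMeasure μ] [IsFiniteMeasure ρ]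
    (S : Finset ℤ) (hS : ∀ y ∉ S, μ {y} = 0) (x : ℤ) :
    (cvE (fun y => μ {y}) (fun y => ρ {y}) x).toReal
      = ∑ y ∈ S, atR μ y * atR ρ (x - y) := by
  unfold cvE
  rw [tsum_eq_sum (s := S) (fun y hy => by simp only []; rw [hS y hy, mul_zero])]
  rw [ENNReal.toReal_sum (fun y _ => ENNReal.mul_ne_top (measure_ne_top _ _) (measure_ne_top _ _))]
  exact Finset.sum_congr rfl fun y _ => by rw [ENNReal.toReal_mul, mul_comm]; rfl

lemma cons_prob {n : ℕ} (ν : MeasureTheory.Measure ℤ) (μs : Fin n → MeasureTheory.Measure ℤ)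
    [hν : IsProbabilityMeasure ν] [hμ : ∀ i, IsProbabilityMeasure (μs i)] :
    ∀ i, IsProbabilityMeasure ((Fin.cons ν μs : Fin (n+1) → MeasureTheory.Measure ℤ) i) := by
  intro i
  refine Fin.cases ?_ ?_ i
  · rw [Fin.cons_zero]; exact hν
  · intro j; rw [Fin.cons_succ]; exact hμ j

lemma lawSum_cons_cons {n : ℕ} (ν μ0 : MeasureTheory.Measure ℤ)
    (t : Fin n → MeasureTheory.Measure ℤ)
    [IsProbabilityMeasure ν] [IsProbabilityMeasure μ0] [∀ i, IsProbabilityMeasure (t i)]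
    (x : ℤ) :
    lawSum (Fin.cons ν (Fin.cons μ0 t)) {x}
      = cvE (fun y => μ0 {y}) (fun y => lawSum (Fin.cons ν t) {y}) x := by
  haveI := cons_prob μ0 t
  haveI := cons_prob ν t
  rw [lawSum_cons ν (Fin.cons μ0 t) x]
  have h1 : (fun y => lawSum (Fin.cons μ0 t) {y})
      = cvE (fun y => μ0 {y}) (fun y => lawSum t {y}) := funext (lawSum_cons μ0 t)
  rw [h1]
  rw [cvE_assoc]
  rw [show cvE (fun y => ν {y}) (fun y => μ0 {y}) = cvE (fun y => μ0 {y}) (fun y => ν {y})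
    from funext (cvE_comm _ _)]
  rw [← cvE_assoc]
  rw [show cvE (fun y => ν {y}) (fun y => lawSum t {y}) = (fun y => lawSum (Fin.cons ν t) {y})
    from (funext (lawSum_cons ν t)).symm]

lemma lawSum_merge {n : ℕ} (ν μ0 : MeasureTheory.Measure ℤ)
    (t : Fin n → MeasureTheory.Measure ℤ)
    [IsProbabilityMeasure ν] [IsProbabilityMeasure μ0] [∀ i, IsProbabilityMeasure (t i)]
    (x : ℤ) :
    lawSum (Fin.cons ν (Fin.cons μ0 t)) {x} = lawSum (Fin.cons (mcv ν μ0) t) {x} := by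
  haveI := cons_prob μ0 t
  rw [lawSum_cons ν (Fin.cons μ0 t) x, lawSum_cons (mcv ν μ0) t x]
  have h1 : (fun y => lawSum (Fin.cons μ0 t) {y})
      = cvE (fun y => μ0 {y}) (fun y => lawSum t {y}) := funext (lawSum_cons μ0 t)
  have h2 : (fun y => (mcv ν μ0) {y})
      = cvE (fun y => ν {y}) (fun y => μ0 {y}) := funext (mcv_atom ν μ0)
  rw [h1, h2, cvE_assoc]

lemma lawSum_nil_cons (ν : MeasureTheory.Measure ℤ) (μs : Fin 0 → MeasureTheory.Measure ℤ)
    [IsProbabilityMeasure ν] :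
    ∀ x : ℤ, lawSum (Fin.cons ν μs) {x} = ν {x} := by
  intro x
  haveI : ∀ i, IsProbabilityMeasure (μs i) := fun i => i.elim0
  rw [lawSum_cons ν μs x, cvE_delta _ _ (lawSum_nil μs) x]

lemma good_zero_of_toReal {ν : MeasureTheory.Measure ℤ} [IsFiniteMeasure ν] {c d : ℤ}
    (h : Good (atR ν) c d) : ∀ y : ℤ, y ∉ Finset.Icc c d → ν {y} = 0 := by
  intro y hy
  simp only [Finset.mem_Icc] at hy
  have h0 : atR ν y = 0 := by
    by_contra hne
    have := h.supp y hne
    omega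
  rw [atR] at h0
  exact (ENNReal.toReal_eq_zero_iff _).1 h0 |>.resolve_right (measure_ne_top _ _)

lemma good_mcv {ν μ0 : MeasureTheory.Measure ℤ} [IsProbabilityMeasure ν]
    [IsProbabilityMeasure μ0] {c d a b : ℤ}
    (hν : Good (atR ν) c d) (hμ : Good (atR μ0) a b) :
    Good (atR (mcv ν μ0)) (c + a) (d + b) := by
  have he : atR (mcv ν μ0) = rcv (atR ν) (atR μ0) c d := by
    funext x
    rw [atR]
    rw [mcv_atom ν μ0 x, cvE_atoms_toReal ν μ0 _ (good_zero_of_toReal hν) x]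
    rfl
  rw [he]
  exact hν.rcv hμ

lemma glem : ∀ {n : ℕ} (ν : MeasureTheory.Measure ℤ), IsProbabilityMeasure ν →
    (∃ c d, Good (atR ν) c d) →
    ∀ (μs : Fin n → MeasureTheory.Measure ℤ), (∀ i, IsProbabilityMeasure (μs i)) →
    (∀ i, ∃ a b, Good (atR (μs i)) a b) →
    ∃ c d, Good (atR (lawSum (Fin.cons ν μs))) c d := by
  intro n
  induction n with
  | zero =>
    intro ν hp ⟨c, d, hgood⟩ μs _ _
    haveI := hp
    refine ⟨c, d, ?_⟩
    have he : atR (lawSum (Fin.cons ν μs)) = atR ν := by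
      funext x
      rw [atR, atR, lawSum_nil_cons ν μs x]
    rw [he]
    exact hgood
  | succ n ih =>
    intro ν hp ⟨c, d, hgood⟩ μs hprob hgoods
    haveI := hp
    haveI := hprob
    haveI : ∀ i, IsProbabilityMeasure (Fin.tail μs i) := fun i => hprob i.succ
    haveI : IsProbabilityMeasure (μs 0) := hprob 0
    obtain ⟨a, b, hg0⟩ := hgoods 0
    haveI : ∀ i : Fin n, IsProbabilityMeasure (Fin.tail μs i) := fun i => hprob i.succ
    have key := ih (mcv ν (μs 0)) inferInstance ⟨c + a, d + b, good_mcv hgood hg0⟩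
      (Fin.tail μs) (fun i => hprob i.succ) (fun i => hgoods i.succ)
    obtain ⟨c', d', hgood'⟩ := key
    refine ⟨c', d', ?_⟩
    have he : atR (lawSum (Fin.cons ν μs)) = atR (lawSum (Fin.cons (mcv ν (μs 0)) (Fin.tail μs))) := by
      funext x
      rw [atR, atR]
      have e0 : (Fin.cons ν μs : Fin (n+2) → MeasureTheory.Measure ℤ)
          = Fin.cons ν (Fin.cons (μs 0) (Fin.tail μs)) := by rw [Fin.cons_self_tail]
      rw [e0, lawSum_merge ν (μs 0) (Fin.tail μs) x]
    rw [he]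
    exact hgood'

lemma atR_le_one (μ : MeasureTheory.Measure ℤ) [IsProbabilityMeasure μ] (x : ℤ) :
    atR μ x ≤ 1 := by
  rw [atR, ← ENNReal.toReal_one]
  exact ENNReal.toReal_mono ENNReal.one_ne_top prob_le_one

lemma concQ_le_one (μ : MeasureTheory.Measure ℤ) [IsProbabilityMeasure μ] : concQ μ ≤ 1 :=
  Real.iSup_le (fun x => atR_le_one μ x) zero_le_one

lemma atR_le_concQ (μ : MeasureTheory.Measure ℤ) [IsProbabilityMeasure μ] (x : ℤ) :
    atR μ x ≤ concQ μ := by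
  rw [concQ_eq_iSup_atR]
  exact le_ciSup ⟨1, by rintro _ ⟨y, rfl⟩; exact atR_le_one μ y⟩ x

end Bridge2

section MainArg
open Finset MeasureTheory
open scoped ENNReal

lemma dirac_atom (a x : ℤ) : (MeasureTheory.Measure.dirac a) {x} = if x = a then 1 else 0 := by
  rw [Measure.dirac_apply]
  by_cases h : x = a
  · simp [Set.indicator_apply, h]
  · simp [Set.indicator_apply, h, Ne.symm h]

lemma dirac_good : Good (atR (MeasureTheory.Measure.dirac (0:ℤ))) 0 0 := by
  have hv : ∀ x : ℤ, atR (MeasureTheory.Measure.dirac (0:ℤ)) x = if x = 0 then 1 else 0 := by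
    intro x
    rw [atR]
    rw [dirac_atom 0 x]
    by_cases h : x = 0 <;> simp [h]
  refine ⟨le_rfl, fun x => ?_, fun x h1 h2 => ?_, fun x hx => ?_, fun i => ?_⟩
  · rw [hv]; by_cases h : x = 0 <;> simp [h]
  · rw [hv, if_pos (by omega)]; norm_num
  · rw [hv] at hx
    by_cases h : x = 0
    · omega
    · rw [if_neg h] at hx; exact absurd rfl hx
  · have : atR (MeasureTheory.Measure.dirac (0:ℤ)) (i-1) * atR (MeasureTheory.Measure.dirac (0:ℤ)) (i+1) = 0 := by
      by_cases h : i - 1 = 0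
      · rw [hv (i+1), if_neg (by omega), mul_zero]
      · rw [hv (i-1), if_neg h, zero_mul]
    rw [this]
    exact sq_nonneg _

lemma lawSum_dirac_cons {n : ℕ} (σ : Fin n → MeasureTheory.Measure ℤ)
    [∀ i, IsProbabilityMeasure (σ i)] (x : ℤ) :
    lawSum (Fin.cons (MeasureTheory.Measure.dirac (0:ℤ)) σ) {x} = lawSum σ {x} := by
  rw [lawSum_cons (MeasureTheory.Measure.dirac (0:ℤ)) σ x]
  exact cvE_delta' _ _ (fun y => dirac_atom 0 y) x

lemma main_step : ∀ {n : ℕ} (ν : MeasureTheory.Measure ℤ), IsProbabilityMeasure ν →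
    (∃ c d, Good (atR ν) c d) →
    ∀ (α β : Fin n → ℝ), (∀ i, 0 < α i) → (∀ i, α i ≤ β i) → (∀ i, β i ≤ 1) →
    ∀ (μ : Fin n → MeasureTheory.Measure ℤ), (∀ i, StandardExtremal (α i) (μ i)) →
    ∃ μ' : Fin n → MeasureTheory.Measure ℤ, (∀ i, StandardExtremal (β i) (μ' i)) ∧
      concQ (lawSum (Fin.cons ν μ)) ≤ concQ (lawSum (Fin.cons ν μ')) := by
  intro n
  induction n with
  | zero =>
    intro ν _ _ α β _ _ _ μ _
    exact ⟨μ, fun i => i.elim0, le_rfl⟩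
  | succ n ih =>
    intro ν hνp hνg α β h0 hle h1 μ hSE
    haveI := hνp
    have hα1 : ∀ i, α i ≤ 1 := fun i => (hle i).trans (h1 i)
    have hβ0 : ∀ i, 0 < β i := fun i => lt_of_lt_of_le (h0 i) (hle i)
    haveI hμp : ∀ i, IsProbabilityMeasure (μ i) := fun i => SE_prob (hSE i) (h0 i) (hα1 i)
    set t := Fin.tail μ with ht
    haveI htp : ∀ i, IsProbabilityMeasure (t i) := fun i => hμp i.succ
    haveI : IsProbabilityMeasure (μ 0) := hμp 0
    -- environment for coordinate 0
    obtain ⟨c, d, hρg⟩ := glem ν hνp hνg t (fun i => hμp i.succ)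
      (fun i => SE_good (hSE i.succ) (h0 i.succ) (hα1 i.succ))
    haveI : ∀ i, IsProbabilityMeasure ((Fin.cons ν t : Fin (n+1) → MeasureTheory.Measure ℤ) i) :=
      cons_prob ν t
    haveI : IsProbabilityMeasure (lawSum (Fin.cons ν t)) := lawSum_isProb _
    set ρ := atR (lawSum (Fin.cons ν t)) with hρdef
    obtain ⟨mρ, hrmono, hlmono⟩ := hρg.unimodal
    set k : ℤ := ((⌊(β 0)⁻¹⌋₊ : ℕ) : ℤ) with hkdef
    have hk1 : (1:ℤ) ≤ k := by
      have := nuF_m_pos (hβ0 0) (h1 0)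
      omega
    obtain ⟨a, e, hee, hbound⟩ := core_window ρ (fun x => ENNReal.toReal_nonneg) mρ
      hrmono hlmono (β 0) k hk1 (hβ0 0)
    have hkcast : ((k:ℤ) : ℝ) = ((⌊(β 0)⁻¹⌋₊ : ℕ) : ℝ) := by rw [hkdef]; push_cast; rfl
    -- choose the new coordinate 0 and the target point z₀
    have claim : ∃ (μ0' : MeasureTheory.Measure ℤ) (z₀ : ℤ),
        StandardExtremal (β 0) μ0' ∧ IsProbabilityMeasure μ0' ∧
        ∃ Sq : Finset ℤ, (∀ y ∉ Sq, μ0' {y} = 0) ∧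
          ∑ y ∈ Sq, atR μ0' y * ρ (z₀ - y)
            = β 0 * (∑ j ∈ (Finset.Icc a (a+k)).erase e, ρ j) + (1 - β 0 * k) * ρ e := by
      rcases hee with he | he
      · -- e = a : plain pattern, z₀ = a + k
        refine ⟨MeasureTheory.Measure.map (· + (0:ℤ)) (nu (β 0)), a + k,
          ⟨0, Or.inl rfl⟩, SE_prob ⟨0, Or.inl rfl⟩ (hβ0 0) (h1 0),
          Finset.Icc 0 k, ?_, ?_⟩
        · intro y hy
          simp only [Finset.mem_Icc] at hy
          rw [map_add_atom, nu_atom, nuF_val_out (by omega), ENNReal.ofReal_zero]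
        · have hval : ∀ y : ℤ, atR (MeasureTheory.Measure.map (· + (0:ℤ)) (nu (β 0))) y
              = nuF (β 0) y := by
            intro y
            rw [atR]
            rw [map_add_atom, nu_atom, show y - 0 = y by omega,
              ENNReal.toReal_ofReal (nuF_nn (hβ0 0) _)]
          rw [Finset.sum_congr rfl fun y _ => by rw [hval y]]
          rw [show Finset.Icc (0:ℤ) k = insert k (Finset.Icc (0:ℤ) (k-1)) by
            ext z; simp only [Finset.mem_insert, Finset.mem_Icc]; omega]
          rw [Finset.sum_insert (by simp only [Finset.mem_Icc]; omega)]
          have hterm : nuF (β 0) k * ρ (a + k - k) = (1 - β 0 * k) * ρ e := by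
            rw [show a + k - k = a by omega, ← he, hkdef, nuF_val_m, hkcast]
          have hrest : ∑ y ∈ Finset.Icc (0:ℤ) (k-1), nuF (β 0) y * ρ (a + k - y)
              = β 0 * ∑ j ∈ (Finset.Icc a (a+k)).erase e, ρ j := by
            rw [show (Finset.Icc a (a+k)).erase e = Finset.image (fun y => a + k - y) (Finset.Icc (0:ℤ) (k-1)) by
              ext z
              simp only [Finset.mem_erase, Finset.mem_image, Finset.mem_Icc, he]
              constructor
              · intro hz; exact ⟨a + k - z, by omega, by omega⟩
              · rintro ⟨u, hu, rfl⟩; omega]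
            rw [Finset.sum_image (by intro p _ q _ hpq; simp only at hpq; omega), Finset.mul_sum]
            refine Finset.sum_congr rfl fun y hy => ?_
            simp only [Finset.mem_Icc] at hy
            rw [nuF_val_in (by omega) (by rw [← hkdef]; omega)]
          rw [hterm, hrest]
          ring
      · -- e = a + k : reflected pattern, z₀ = a
        refine ⟨MeasureTheory.Measure.map (fun y : ℤ => -y + (0:ℤ)) (nu (β 0)), a,
          ⟨0, Or.inr rfl⟩, SE_prob ⟨0, Or.inr rfl⟩ (hβ0 0) (h1 0),
          Finset.Icc (-k) 0, ?_, ?_⟩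
        · intro y hy
          simp only [Finset.mem_Icc] at hy
          rw [map_neg_atom, nu_atom, nuF_val_out (by omega), ENNReal.ofReal_zero]
        · have hval : ∀ y : ℤ, atR (MeasureTheory.Measure.map (fun y : ℤ => -y + (0:ℤ)) (nu (β 0))) y
              = nuF (β 0) (-y) := by
            intro y
            rw [atR]
            rw [map_neg_atom, nu_atom, show (0:ℤ) - y = -y by omega,
              ENNReal.toReal_ofReal (nuF_nn (hβ0 0) _)]
          rw [Finset.sum_congr rfl fun y _ => by rw [hval y]]
          rw [show Finset.Icc (-k) (0:ℤ) = insert (-k) (Finset.Icc (-k+1) (0:ℤ)) by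
            ext z; simp only [Finset.mem_insert, Finset.mem_Icc]; omega]
          rw [Finset.sum_insert (by simp only [Finset.mem_Icc]; omega)]
          have hterm : nuF (β 0) (-(-k)) * ρ (a - -k) = (1 - β 0 * k) * ρ e := by
            rw [show -(-k) = k by omega, show a - -k = a + k by omega, ← he, hkdef, nuF_val_m, hkcast]
          have hrest : ∑ y ∈ Finset.Icc (-k+1) (0:ℤ), nuF (β 0) (-y) * ρ (a - y)
              = β 0 * ∑ j ∈ (Finset.Icc a (a+k)).erase e, ρ j := by
            rw [show (Finset.Icc a (a+k)).erase e = Finset.image (fun y => a - y) (Finset.Icc (-k+1) (0:ℤ)) by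
              ext z
              simp only [Finset.mem_erase, Finset.mem_image, Finset.mem_Icc, he]
              constructor
              · intro hz; exact ⟨a - z, by omega, by omega⟩
              · rintro ⟨u, hu, rfl⟩; omega]
            rw [Finset.sum_image (by intro p _ q _ hpq; simp only at hpq; omega), Finset.mul_sum]
            refine Finset.sum_congr rfl fun y hy => ?_
            simp only [Finset.mem_Icc] at hy
            rw [nuF_val_in (by omega) (by rw [← hkdef]; omega)]
          rw [hterm, hrest]
          ring
    obtain ⟨μ0', z₀, hSE0', hp0', Sq, hSqsupp, hSqsum⟩ := claim
    haveI := hp0'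
    -- step 1 : concQ (lawSum (cons ν μ)) ≤ concQ (lawSum (cons ν (cons μ0' t)))
    have e0 : (Fin.cons ν μ : Fin (n+2) → MeasureTheory.Measure ℤ)
        = Fin.cons ν (Fin.cons (μ 0) t) := by rw [ht, Fin.cons_self_tail]
    obtain ⟨S₀, hS₀supp, hS₀sum⟩ := SE_weights (hSE 0) (h0 0) (hα1 0)
    haveI : ∀ i, IsProbabilityMeasure
        ((Fin.cons ν (Fin.cons μ0' t) : Fin (n+2) → MeasureTheory.Measure ℤ) i) := by
      haveI := cons_prob μ0' t
      exact cons_prob ν (Fin.cons μ0' t)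
    haveI : IsProbabilityMeasure (lawSum (Fin.cons ν (Fin.cons μ0' t))) := lawSum_isProb _
    have hG : atR (lawSum (Fin.cons ν (Fin.cons μ0' t))) z₀
        = β 0 * (∑ j ∈ (Finset.Icc a (a+k)).erase e, ρ j) + (1 - β 0 * k) * ρ e := by
      rw [atR]
      rw [lawSum_cons_cons ν μ0' t z₀, cvE_atoms_toReal μ0' _ Sq hSqsupp z₀]
      exact hSqsum
    have hF : ∀ x, atR (lawSum (Fin.cons ν μ)) x
        ≤ atR (lawSum (Fin.cons ν (Fin.cons μ0' t))) z₀ := by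
      intro x
      have hLHS : atR (lawSum (Fin.cons ν μ)) x
          = ∑ y ∈ S₀, atR (μ 0) y * ρ (x - y) := by
        rw [atR, e0]
        rw [lawSum_cons_cons ν (μ 0) t x, cvE_atoms_toReal (μ 0) _ S₀ hS₀supp x]
      set T : Finset ℤ := S₀.image (fun y => x - y) with hT
      have hre : ∑ y ∈ S₀, atR (μ 0) y * ρ (x - y)
          = ∑ u ∈ T, atR (μ 0) (x - u) * ρ u := by
        rw [hT, Finset.sum_image (by intro p _ q _ hpq; simp only at hpq; omega)]
        refine Finset.sum_congr rfl fun y _ => ?_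
        rw [show x - (x - y) = y by omega]
      have hws : ∑ u ∈ T, atR (μ 0) (x - u) = 1 := by
        rw [hT, Finset.sum_image (by intro p _ q _ hpq; simp only at hpq; omega)]
        rw [Finset.sum_congr rfl fun y _ => by rw [show x - (x - y) = y by omega]]
        exact hS₀sum
      have := hbound (fun u => atR (μ 0) (x - u)) T
        (fun u => ENNReal.toReal_nonneg)
        (fun u => (SE_cap (hSE 0) (h0 0) (x - u)).trans (hle 0))
        hws
      rw [hLHS, hre, hG]
      exact this
    have step1 : concQ (lawSum (Fin.cons ν μ)) ≤ concQ (lawSum (Fin.cons ν (Fin.cons μ0' t))) := by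
      rw [concQ_eq_iSup_atR (lawSum (Fin.cons ν μ))]
      refine Real.iSup_le (fun x => (hF x).trans (atR_le_concQ _ z₀)) ?_
      exact le_trans ENNReal.toReal_nonneg (atR_le_concQ _ z₀)
    -- step 2 : improve the tail
    set ν₂ := mcv ν μ0' with hν₂
    haveI : IsProbabilityMeasure ν₂ := mcv_isProb ν μ0'
    obtain ⟨aq, bq, hq⟩ := SE_good hSE0' (hβ0 0) (h1 0)
    obtain ⟨cν, dν, hgν⟩ := hνg
    obtain ⟨t', hSEt', hconc⟩ := ih ν₂ inferInstance ⟨cν + aq, dν + bq, good_mcv hgν hq⟩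
      (Fin.tail α) (Fin.tail β) (fun i => h0 i.succ) (fun i => hle i.succ) (fun i => h1 i.succ)
      t (fun i => hSE i.succ)
    haveI : ∀ i, IsProbabilityMeasure (t' i) :=
      fun i => SE_prob (hSEt' i) (hβ0 i.succ) (h1 i.succ)
    have eq1 : concQ (lawSum (Fin.cons ν (Fin.cons μ0' t))) = concQ (lawSum (Fin.cons ν₂ t)) :=
      concQ_congr (fun x => lawSum_merge ν μ0' t x)
    have eq2 : concQ (lawSum (Fin.cons ν (Fin.cons μ0' t'))) = concQ (lawSum (Fin.cons ν₂ t')) :=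
      concQ_congr (fun x => lawSum_merge ν μ0' t' x)
    refine ⟨Fin.cons μ0' t', ?_, ?_⟩
    · intro i
      refine Fin.cases ?_ ?_ i
      · rw [Fin.cons_zero]; exact hSE0'
      · intro j; rw [Fin.cons_succ]; exact hSEt' j
    · calc concQ (lawSum (Fin.cons ν μ))
          ≤ concQ (lawSum (Fin.cons ν (Fin.cons μ0' t))) := step1
        _ = concQ (lawSum (Fin.cons ν₂ t)) := eq1
        _ ≤ concQ (lawSum (Fin.cons ν₂ t')) := hconc
        _ = concQ (lawSum (Fin.cons ν (Fin.cons μ0' t'))) := eq2.symm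

end MainArg

end Aux

theorem statement6 (n : ℕ) (α β : Fin n → ℝ)
    (h0 : ∀ i, 0 < α i) (hle : ∀ i, α i ≤ β i) (h1 : ∀ i, β i ≤ 1) :
    tSE α ≤ tSE β := by
  classical
  have hβ0 : ∀ i, 0 < β i := fun i => lt_of_lt_of_le (h0 i) (hle i)
  have hα1 : ∀ i, α i ≤ 1 := fun i => (hle i).trans (h1 i)
  have hbdd : BddAbove {t : ℝ | ∃ μ : Fin n → MeasureTheory.Measure ℤ,
      (∀ i, StandardExtremal (β i) (μ i)) ∧ t = concQ (lawSum μ)} := by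
    refine ⟨1, ?_⟩
    rintro tt ⟨μ', hSE', rfl⟩
    haveI : ∀ i, MeasureTheory.IsProbabilityMeasure (μ' i) :=
      fun i => SE_prob (hSE' i) (hβ0 i) (h1 i)
    haveI : MeasureTheory.IsProbabilityMeasure (lawSum μ') := lawSum_isProb _
    exact concQ_le_one (lawSum μ')
  unfold tSE
  apply csSup_le
  · exact ⟨concQ (lawSum (fun i => MeasureTheory.Measure.map (· + (0:ℤ)) (nu (α i)))),
      (fun i => MeasureTheory.Measure.map (· + (0:ℤ)) (nu (α i))),
      fun i => ⟨0, Or.inl rfl⟩, rfl⟩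
  · rintro tt ⟨μ, hSE, rfl⟩
    haveI : ∀ i, MeasureTheory.IsProbabilityMeasure (μ i) :=
      fun i => SE_prob (hSE i) (h0 i) (hα1 i)
    obtain ⟨μ', hSE', hle'⟩ := main_step (MeasureTheory.Measure.dirac (0:ℤ)) inferInstance
      ⟨0, 0, dirac_good⟩ α β h0 hle h1 μ hSE
    haveI : ∀ i, MeasureTheory.IsProbabilityMeasure (μ' i) :=
      fun i => SE_prob (hSE' i) (hβ0 i) (h1 i)
    have e1 : concQ (lawSum μ) = concQ (lawSum (Fin.cons (MeasureTheory.Measure.dirac (0:ℤ)) μ)) :=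
      (concQ_congr (fun x => lawSum_dirac_cons μ x)).symm
    have e2 : concQ (lawSum (Fin.cons (MeasureTheory.Measure.dirac (0:ℤ)) μ'))
        = concQ (lawSum μ') :=
      concQ_congr (fun x => lawSum_dirac_cons μ' x)
    have : concQ (lawSum μ) ≤ concQ (lawSum μ') := by
      rw [e1, ← e2]; exact hle'
    exact this.trans (le_csSup hbdd ⟨μ', hSE', rfl⟩)
end

section
/- Let μ_1, …, μ_n and μ_1', …, μ_n' be two sequences of probability measures on ℤ such that every measure is symmetric and unimodal and μ_i' ≼ μ_i for each i ∈ {1,…,n}. Then μ_1' * ⋯ * μ_n' ≼ μ_1 * ⋯ * μ_n. -/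
open MeasureTheory ProbabilityTheory
open scoped ENNReal ProbabilityTheory

noncomputable section AuxStatement11

open MeasureTheory Filter
open scoped ENNReal

/-- centered interval of `m` integers -/
def IS (m : ℕ) : Finset ℤ := Finset.Ico (-(m/2 : ℕ) : ℤ) (-(m/2 : ℕ) + m)

/-- symmetric unimodal (centered at 0) function -/
def SU (f : ℤ → ℝ≥0∞) : Prop :=
  (∀ i : ℤ, f (-i) = f i) ∧ ∀ i : ℤ, 0 ≤ i → f (i + 1) ≤ f i

/-- convolution of densities -/
def cv (f g : ℤ → ℝ≥0∞) : ℤ → ℝ≥0∞ := fun a => ∑' x, f x * g (a - x)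

lemma mem_IS {m : ℕ} {y : ℤ} : y ∈ IS m ↔ (-(m/2 : ℕ) : ℤ) ≤ y ∧ y < -(m/2 : ℕ) + m := by
  simp [IS]

lemma card_IS (m : ℕ) : (IS m).card = m := by
  simp [IS]

lemma SU.mono_nat {f : ℤ → ℝ≥0∞} (hf : SU f) : ∀ a b : ℕ, a ≤ b → f b ≤ f a := by
  intro a b hab
  induction b with
  | zero => simp_all
  | succ n ih =>
    rcases Nat.lt_or_ge a (n+1) with h | h
    · calc f ((n:ℤ)+1) ≤ f n := hf.2 n (by positivity)
        _ ≤ f a := ih (by omega)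
      |>.trans_eq (by norm_num) |>.trans_eq' (by push_cast; ring_nf)
    · have : a = n+1 := le_antisymm hab h
      subst this; rfl

lemma SU.abs {f : ℤ → ℝ≥0∞} (hf : SU f) (x : ℤ) : f x = f (x.natAbs) := by
  rcases Int.natAbs_eq x with h | h
  · rw [← h]
  · rw [h, ← hf.1]; norm_num

lemma SU.mono {f : ℤ → ℝ≥0∞} (hf : SU f) {x y : ℤ} (h : x.natAbs ≤ y.natAbs) :
    f y ≤ f x := by
  rw [hf.abs x, hf.abs y]; exact hf.mono_nat _ _ h

/-- symmetric + unimodal at some mode implies SU -/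
lemma su_of_symm_unimodal {f : ℤ → ℝ≥0∞} (hs : ∀ i : ℤ, f (-i) = f i)
    (hu : ∃ m : ℤ, (∀ i, m ≤ i → f (i + 1) ≤ f i) ∧ (∀ i, i ≤ m → f (i - 1) ≤ f i)) :
    SU f := by
  obtain ⟨m, h1, h2⟩ := hu
  refine ⟨hs, ?_⟩
  intro i hi
  rcases le_or_gt m i with h | h
  · exact h1 i h
  · have chain : ∀ a b : ℤ, a ≤ b → b ≤ m → f a ≤ f b := by
      intro a b hab hbm
      obtain ⟨n, rfl⟩ : ∃ n : ℕ, b = a + n := ⟨(b-a).toNat, by omega⟩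
      clear hab
      induction n with
      | zero => simp
      | succ k ih =>
        have hk : a + (k:ℤ) ≤ m := by push_cast at hbm ⊢; omega
        calc f a ≤ f (a + k) := ih (by omega)
          _ ≤ f (a + (k+1)) := by
              have := h2 (a + k + 1) (by omega)
              have e : a + (k:ℤ) + 1 - 1 = a + k := by ring
              rw [e] at this
              convert this using 2
              push_cast; ring
    have : f (-(i+1)) ≤ f i := chain (-(i+1)) i (by omega) (by omega)
    rwa [hs] at this

/-- spiral enumeration 0, -1, 1, -2, 2, ... -/
def spir (n : ℕ) : ℤ := if n % 2 = 1 then -(((n+1)/2 : ℕ) : ℤ) else ((n/2 : ℕ) : ℤ)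

/-- rank of an integer in the spiral -/
def rk (x : ℤ) : ℕ := if x < 0 then (2 * (-x) - 1).toNat else (2*x).toNat

lemma spir_rk (x : ℤ) : spir (rk x) = x := by
  unfold spir rk
  rcases lt_or_ge x 0 with h | h
  · simp only [if_pos h]; split <;> omega
  · simp only [if_neg (not_lt.mpr h)]; split <;> omega

lemma rk_spir (n : ℕ) : rk (spir n) = n := by
  unfold spir rk
  split <;> split <;> omega

lemma rk_inj : Function.Injective rk :=
  fun a b h => by rw [← spir_rk a, ← spir_rk b, h]

lemma natAbs_spir_le {a b : ℕ} (h : a ≤ b) : (spir a).natAbs ≤ (spir b).natAbs := by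
  unfold spir
  split <;> split <;> simp <;> omega

lemma image_spir_range (m : ℕ) : (Finset.range m).image spir = IS m := by
  induction m with
  | zero => simp [IS]
  | succ n ih =>
    rw [Finset.range_add_one, Finset.image_insert, ih]
    ext y
    simp only [Finset.mem_insert, IS, Finset.mem_Ico, spir]
    rcases Nat.even_or_odd n with ⟨k, hk⟩ | ⟨k, hk⟩
    · rw [if_neg (by omega)]
      constructor
      · rintro (rfl | h) <;> omega
      · intro h; omega
    · rw [if_pos (by omega)]
      constructor
      · rintro (rfl | h) <;> omega
      · intro h; omega

/-- sum of an antitone ℕ-function over a finset is at most over an initial segment -/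
lemma sum_le_range_of_antitone (g : ℕ → ℝ≥0∞) (hg : ∀ a b : ℕ, a ≤ b → g b ≤ g a) :
    ∀ (m : ℕ) (B : Finset ℕ), B.card = m → ∑ n ∈ B, g n ≤ ∑ n ∈ Finset.range m, g n := by
  intro m
  induction m with
  | zero => intro B hB; simp [Finset.card_eq_zero.mp hB]
  | succ k ih =>
    intro B hB
    have hne : B.Nonempty := Finset.card_pos.mp (by omega)
    obtain ⟨b, hb, hmax⟩ := B.exists_max_image id hne
    have hsub : B ⊆ Finset.range (b+1) := by
      intro x hx; simp only [Finset.mem_range]; exact Nat.lt_succ_of_le (hmax x hx)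
    have hbk : k ≤ b := by
      have := Finset.card_le_card hsub
      simp [hB] at this; omega
    have hcard : (B.erase b).card = k := by rw [Finset.card_erase_of_mem hb, hB]; omega
    calc ∑ n ∈ B, g n = ∑ n ∈ B.erase b, g n + g b := by
          rw [Finset.sum_erase_add _ _ hb]
      _ ≤ ∑ n ∈ Finset.range k, g n + g k := add_le_add (ih _ hcard) (hg _ _ hbk)
      _ = ∑ n ∈ Finset.range (k+1), g n := (Finset.sum_range_succ g k).symm

/-- Lemma A: centered interval is optimal for SU functions -/
lemma lemA {f : ℤ → ℝ≥0∞} (hf : SU f) (A : Finset ℤ) :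
    ∑ a ∈ A, f a ≤ ∑ a ∈ IS A.card, f a := by
  have h1 : ∑ a ∈ A, f a = ∑ n ∈ A.image rk, f (spir n) := by
    rw [Finset.sum_image (fun a _ b _ h => rk_inj h)]
    exact Finset.sum_congr rfl fun a _ => by rw [spir_rk]
  have h2 : ∑ n ∈ Finset.range A.card, f (spir n) = ∑ a ∈ IS A.card, f a := by
    rw [← image_spir_range, Finset.sum_image]
    intro a ha b hb h
    have := congrArg rk h
    rwa [rk_spir, rk_spir] at this
  rw [h1, ← h2]
  exact sum_le_range_of_antitone (fun n => f (spir n))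
    (fun a b h => hf.mono (natAbs_spir_le h)) A.card (A.image rk)
    (Finset.card_image_of_injective A rk_inj)

section layer
variable {f : ℤ → ℝ≥0∞}

lemma su_telescope (hf : SU f) (n N : ℕ) :
    ∑ k ∈ Finset.range N, (if n ≤ k then f k - f (k+1) else 0) = f n - f N := by
  induction N with
  | zero =>
    simp only [Finset.range_zero, Finset.sum_empty]
    exact (tsub_eq_zero_of_le (hf.mono (by simp))).symm
  | succ N ih =>
    rw [Finset.sum_range_succ, ih]
    by_cases h : n ≤ N
    · rw [if_pos h]
      push_cast
      exact tsub_add_tsub_cancel (hf.mono (by simp [Int.natAbs_natCast]; omega))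
        (hf.mono (by simp [Int.natAbs_natCast]; omega))
    · rw [if_neg h, add_zero, tsub_eq_zero_of_le, tsub_eq_zero_of_le] <;>
        exact hf.mono (by simp [Int.natAbs_natCast]; omega)

lemma layer_pt (hf : SU f) (hten : Tendsto (fun N : ℕ => f N) atTop (nhds 0)) (x : ℤ) :
    ∑' k : ℕ, (if x.natAbs ≤ k then f k - f (k+1) else 0) = f x := by
  rw [ENNReal.tsum_eq_iSup_nat]
  have h1 : ∀ N, ∑ k ∈ Finset.range N, (if x.natAbs ≤ k then f k - f (k+1) else 0)
      = f x.natAbs - f N := fun N => su_telescope hf _ N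
  simp only [h1]
  have hinf : ⨅ N : ℕ, f N = (0 : ℝ≥0∞) := by
    have hanti : Antitone (fun N : ℕ => f N) := fun a b hab => hf.mono (by simpa using hab)
    exact tendsto_nhds_unique (tendsto_atTop_iInf hanti) hten
  rw [← ENNReal.sub_iInf, hinf, tsub_zero, ← hf.abs]

/-- Lemma E : layer-cake decomposition against a weight -/
lemma lemE (hf : SU f) (hsum : ∑' x, f x ≠ ⊤) (w : ℤ → ℝ≥0∞) :
    ∑' x, f x * w x
      = ∑' k : ℕ, (f k - f (k+1)) * ∑ x ∈ Finset.Icc (-(k:ℤ)) k, w x := by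
  have hten : Tendsto (fun N : ℕ => f N) atTop (nhds 0) := by
    apply ENNReal.tendsto_atTop_zero_of_tsum_ne_top
    exact ne_top_of_le_ne_top hsum
      (ENNReal.tsum_comp_le_tsum_of_injective (fun a b => by omega) f)
  have step1 : ∀ k : ℕ, (f k - f (k+1)) * ∑ x ∈ Finset.Icc (-(k:ℤ)) k, w x
      = ∑' x : ℤ, (if x.natAbs ≤ k then (f k - f (k+1)) * w x else 0) := by
    intro k
    rw [Finset.mul_sum, tsum_eq_sum (s := Finset.Icc (-(k:ℤ)) k)
      (fun x hx => if_neg (by simp only [Finset.mem_Icc] at hx; omega))]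
    exact Finset.sum_congr rfl fun x hx =>
      (if_pos (by simp only [Finset.mem_Icc] at hx; omega)).symm
  simp only [step1]
  rw [ENNReal.tsum_comm]
  apply tsum_congr
  intro x
  have : ∀ k : ℕ, (if x.natAbs ≤ k then (f k - f (k+1)) * w x else 0)
      = (if x.natAbs ≤ k then (f k - f (k+1)) else 0) * w x := by
    intro k; split <;> simp
  simp only [this]
  rw [ENNReal.tsum_mul_right, layer_pt hf hten x]
end layer

lemma sum_count {β : Type*} (s : Finset β) (t : β → Finset ℤ) (T : Finset ℤ)
    (hT : ∀ b ∈ s, t b ⊆ T) (q : ℤ → ℝ≥0∞) :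
    ∑ b ∈ s, ∑ y ∈ t b, q y
      = ∑ y ∈ T, ((s.filter (fun b => y ∈ t b)).card : ℝ≥0∞) * q y := by
  have h1 : ∀ b ∈ s, ∑ y ∈ t b, q y = ∑ y ∈ T, (if y ∈ t b then q y else 0) := by
    intro b hb
    rw [Finset.sum_ite_mem, Finset.inter_eq_right.mpr (hT b hb)]
  rw [Finset.sum_congr rfl h1, Finset.sum_comm]
  apply Finset.sum_congr rfl
  intro y _
  rw [Finset.sum_ite, Finset.sum_const_zero, add_zero, Finset.sum_const, nsmul_eq_mul]

/-- Claim T: the trapezoid identity -/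
lemma claimT (q : ℤ → ℝ≥0∞) (j k : ℕ) :
    ∑ x ∈ Finset.Icc (-(k:ℤ)) k, ∑ a ∈ IS j, q (a - x)
      = ∑ t ∈ Finset.Icc 1 (min j (2*k+1)), ∑ y ∈ IS (j + 2*k + 2 - 2*t), q y := by
  have hL : ∀ x : ℤ, ∑ a ∈ IS j, q (a - x)
      = ∑ y ∈ (IS j).map (Equiv.subRight x).toEmbedding, q y := by
    intro x; rw [Finset.sum_map]; rfl
  simp only [hL]
  set T : Finset ℤ := IS (j + 2*k) with hT
  have c1 := sum_count (Finset.Icc (-(k:ℤ)) k)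
    (fun x => (IS j).map (Equiv.subRight x).toEmbedding) T (by
      intro x hx y hy
      simp only [Finset.mem_Icc] at hx
      rw [Finset.mem_map_equiv] at hy
      simp only [Equiv.subRight_symm_apply] at hy
      rw [mem_IS] at hy
      rw [hT, mem_IS]
      omega) q
  have c2 := sum_count (Finset.Icc 1 (min j (2*k+1)))
    (fun t => IS (j + 2*k + 2 - 2*t)) T (by
      intro t ht y hy
      simp only [Finset.mem_Icc] at ht
      rw [mem_IS] at hy
      rw [hT, mem_IS]
      omega) q
  rw [c1, c2]
  apply Finset.sum_congr rfl
  intro y _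
  congr 2
  have e1 : (Finset.Icc (-(k:ℤ)) k).filter
      (fun x => y ∈ (IS j).map (Equiv.subRight x).toEmbedding)
      = Finset.Icc (max (-(k:ℤ)) (-((j/2 : ℕ) : ℤ) - y)) (min (k:ℤ) (-((j/2:ℕ):ℤ) + j - 1 - y)) := by
    ext x
    simp only [Finset.mem_filter, Finset.mem_Icc, Finset.mem_map_equiv,
      Equiv.subRight_symm_apply, mem_IS]
    omega
  have e2 : (Finset.Icc 1 (min j (2*k+1))).filter (fun t => y ∈ IS (j + 2*k + 2 - 2*t))
      = Finset.Icc 1 (min (min j (2*k+1))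
          (min ((((j/2:ℕ):ℤ) + k + 1 + y).toNat) ((((j:ℤ) - (j/2:ℕ)) + k - y).toNat))) := by
    ext t
    simp only [Finset.mem_filter, Finset.mem_Icc, mem_IS]
    omega
  rw [e1, e2, Int.card_Icc, Nat.card_Icc]
  omega

/-- Step D : monotonicity of the convolution on centered intervals -/
lemma stepD {p q q' : ℤ → ℝ≥0∞} (hp : SU p) (hps : ∑' x, p x ≠ ⊤)
    (hq : ∀ m : ℕ, ∑ y ∈ IS m, q' y ≤ ∑ y ∈ IS m, q y) (j : ℕ) :
    ∑ a ∈ IS j, cv p q' a ≤ ∑ a ∈ IS j, cv p q a := by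
  have key : ∀ r : ℤ → ℝ≥0∞, ∑ a ∈ IS j, cv p r a
      = ∑' k : ℕ, (p k - p (k+1)) *
          ∑ t ∈ Finset.Icc 1 (min j (2*k+1)), ∑ y ∈ IS (j + 2*k + 2 - 2*t), r y := by
    intro r
    have h1 : ∑ a ∈ IS j, cv p r a = ∑' x, p x * ∑ a ∈ IS j, r (a - x) := by
      unfold cv
      rw [← Summable.tsum_finsetSum (fun b _ => ENNReal.summable)]
      exact tsum_congr fun x => (Finset.mul_sum _ _ _).symm
    rw [h1, lemE hp hps]
    apply tsum_congr; intro k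
    rw [claimT]
  rw [key q', key q]
  apply ENNReal.tsum_le_tsum
  intro k
  apply mul_le_mul_right (Finset.sum_le_sum (fun t _ => hq _))

lemma cv_comm (f g : ℤ → ℝ≥0∞) : cv f g = cv g f := by
  funext a
  unfold cv
  rw [← (Equiv.subLeft a).tsum_eq (fun x => f x * g (a - x))]
  apply tsum_congr
  intro y
  simp only [Equiv.subLeft_apply, sub_sub_cancel]
  ring

lemma SU_cv {f g : ℤ → ℝ≥0∞} (hf : SU f) (hg : SU g) (hfs : ∑' x, f x ≠ ⊤) :
    SU (cv f g) := by
  constructor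
  · intro a
    unfold cv
    rw [← (Equiv.neg ℤ).tsum_eq (fun x => f x * g (-a - x))]
    apply tsum_congr
    intro x
    simp only [Equiv.neg_apply]
    rw [hf.1, show -a - -x = -(a - x) by ring, hg.1]
  · intro a ha
    unfold cv
    rw [lemE hf hfs (fun x => g (a - x)), lemE hf hfs (fun x => g (a + 1 - x))]
    apply ENNReal.tsum_le_tsum
    intro k
    apply mul_le_mul_right
    have hmap : ∀ b : ℤ, ∑ x ∈ Finset.Icc (-(k:ℤ)) k, g (b - x)
        = ∑ y ∈ Finset.Icc (b - k) (b + k), g y := by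
      intro b
      rw [show Finset.Icc (b - (k:ℤ)) (b + k)
            = (Finset.Icc (-(k:ℤ)) k).map (Equiv.subLeft b).toEmbedding by
          ext y; rw [Finset.mem_map_equiv]; simp only [Finset.mem_Icc, Equiv.subLeft_symm_apply]
          omega,
        Finset.sum_map]
      rfl
    rw [hmap, hmap]
    have e1 : Finset.Icc (a + 1 - (k:ℤ)) (a + 1 + k)
        = insert (a + 1 + k) (Finset.Icc (a + 1 - k) (a + k)) := by
      ext y; simp only [Finset.mem_insert, Finset.mem_Icc]; omega
    have e2 : Finset.Icc (a - (k:ℤ)) (a + k)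
        = insert (a - k) (Finset.Icc (a + 1 - k) (a + k)) := by
      ext y; simp only [Finset.mem_insert, Finset.mem_Icc]; omega
    rw [e1, e2, Finset.sum_insert (by simp only [Finset.mem_Icc]; omega),
      Finset.sum_insert (by simp only [Finset.mem_Icc]; omega)]
    exact add_le_add (hg.mono (x := a - k) (y := a + 1 + k) (by omega)) le_rfl

instance instMSCFinPiInt (n : ℕ) : MeasurableSingletonClass (Fin n → ℤ) :=
  ⟨fun x => by
    rw [show {x} = Set.pi Set.univ (fun i => {x i}) from (Set.univ_pi_singleton x).symm]
    exact MeasurableSet.univ_pi fun i => measurableSet_singleton _⟩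

lemma meas_sum (n : ℕ) : Measurable (fun x : Fin n → ℤ => ∑ i, x i) :=
  Finset.measurable_sum Finset.univ fun i _ => measurable_pi_apply i

lemma measure_eq_tsum_atoms {α : Type*} [MeasurableSpace α] [MeasurableSingletonClass α]
    [Countable α] (ν : Measure α) (S : Set α) : ν S = ∑' x : S, ν {(x : α)} := by
  conv_lhs => rw [← Set.iUnion_of_singleton_coe S]
  rw [measure_iUnion]
  · intro a b hab
    simp only [Set.disjoint_singleton_left, Set.mem_singleton_iff]
    exact fun h => hab (Subtype.ext h)
  · exact fun x => measurableSet_singleton _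

lemma measure_finset_eq_sum (ν : Measure ℤ) (A : Finset ℤ) :
    ν (A : Set ℤ) = ∑ a ∈ A, ν {a} := by
  rw [measure_eq_tsum_atoms ν (A : Set ℤ)]
  exact Finset.tsum_subtype A (fun a => ν {a})

lemma measure_univ_eq_tsum (ν : Measure ℤ) : ν Set.univ = ∑' a : ℤ, ν {a} := by
  rw [measure_eq_tsum_atoms ν Set.univ, tsum_univ (fun a => ν {a})]

lemma lawSum_bridge {n : ℕ} (μ : Fin n → Measure ℤ) [∀ i, SigmaFinite (μ i)] (c : ℤ) :
    lawSum μ {c}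
      = ∑' y : Fin n → ℤ, if (∑ i, y i) = c then ∏ i, μ i {y i} else 0 := by
  classical
  rw [lawSum, Measure.map_apply (meas_sum n) (measurableSet_singleton c),
    measure_eq_tsum_atoms]
  rw [tsum_subtype ((fun x : Fin n → ℤ => ∑ i, x i) ⁻¹' {c}) (fun y => Measure.pi μ {y})]
  apply tsum_congr
  intro y
  rw [Set.indicator_apply]
  by_cases h : (∑ i, y i) = c
  · rw [if_pos h, if_pos (by simpa using h)]
    rw [show {y} = Set.pi Set.univ (fun i => {y i}) from (Set.univ_pi_singleton y).symm,
      Measure.pi_pi]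
  · rw [if_neg (by simpa using h), if_neg h]

lemma lawSum_zero (μ : Fin 0 → Measure ℤ) [∀ i, SigmaFinite (μ i)] (a : ℤ) :
    lawSum μ {a} = if a = 0 then 1 else 0 := by
  rw [lawSum_bridge]
  rw [tsum_eq_single (fun _ => 0) (by intro y hy; exact absurd (funext fun i => i.elim0) hy)]
  simp [eq_comm]

lemma lawSum_succ {n : ℕ} (μ : Fin (n+1) → Measure ℤ) [∀ i, SigmaFinite (μ i)] (a : ℤ) :
    lawSum μ {a} = cv (fun z => μ 0 {z}) (fun b => lawSum (fun i => μ i.succ) {b}) a := by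
  haveI : ∀ i : Fin n, SigmaFinite ((fun i => μ i.succ) i) := fun i => inferInstance
  rw [lawSum_bridge]
  rw [← (Fin.consEquiv (fun _ : Fin (n+1) => ℤ)).tsum_eq
    (fun y => if (∑ i, y i) = a then ∏ i, μ i {y i} else 0)]
  rw [ENNReal.tsum_prod']
  unfold cv
  apply tsum_congr
  intro z
  show _ = (μ 0) {z} * (lawSum fun i => μ i.succ) {a - z}
  rw [lawSum_bridge, ENNReal.tsum_mul_left.symm]
  apply tsum_congr
  intro y
  have h1 : (Fin.consEquiv (fun _ : Fin (n+1) => ℤ)) (z, y) = Fin.cons z y := rfl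
  rw [h1]
  rw [Fin.sum_univ_succ, Fin.prod_univ_succ]
  simp only [Fin.cons_zero, Fin.cons_succ, mul_ite, mul_zero]
  by_cases h : z + ∑ i : Fin n, y i = a
  · rw [if_pos h, if_pos (by omega)]
  · rw [if_neg h, if_neg (by omega)]

lemma lawSum_prob {n : ℕ} (μ : Fin n → Measure ℤ) [∀ i, IsProbabilityMeasure (μ i)] :
    IsProbabilityMeasure (lawSum μ) := by
  rw [lawSum]
  exact Measure.isProbabilityMeasure_map (meas_sum n).aemeasurable

lemma concQk_bddAbove (ν : Measure ℤ) [IsProbabilityMeasure ν] (j : ℕ) :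
    BddAbove {t : ℝ | ∃ A : Finset ℤ, A.card = j ∧ t = (ν (A : Set ℤ)).toReal} := by
  refine ⟨1, ?_⟩
  rintro t ⟨A, hA, rfl⟩
  calc (ν (A : Set ℤ)).toReal ≤ (1 : ℝ≥0∞).toReal :=
        ENNReal.toReal_mono ENNReal.one_ne_top (prob_le_one)
    _ = 1 := by simp

/-- the main induction -/
lemma main_ind : ∀ (n : ℕ) (μ μ' : Fin n → MeasureTheory.Measure ℤ),
    (∀ i, IsProbabilityMeasure (μ i)) → (∀ i, IsProbabilityMeasure (μ' i)) →
    (∀ i, SU (fun x => μ i {x})) → (∀ i, SU (fun x => μ' i {x})) →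
    (∀ i (m : ℕ), ∑ y ∈ IS m, μ' i {y} ≤ ∑ y ∈ IS m, μ i {y}) →
    SU (fun a => lawSum μ' {a}) ∧
      ∀ m : ℕ, ∑ y ∈ IS m, lawSum μ' {y} ≤ ∑ y ∈ IS m, lawSum μ {y} := by
  intro n
  induction n with
  | zero =>
    intro μ μ' hp hp' _ _ _
    haveI : ∀ i, IsProbabilityMeasure (μ i) := hp
    haveI : ∀ i, IsProbabilityMeasure (μ' i) := hp'
    constructor
    · rw [show (fun a => lawSum μ' {a}) = fun a : ℤ => if a = 0 then 1 else 0 from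
        funext (lawSum_zero μ')]
      constructor
      · intro i; simp [neg_eq_zero]
      · intro i hi
        show (if i + 1 = 0 then (1:ℝ≥0∞) else 0) ≤ if i = 0 then 1 else 0
        rw [if_neg (by omega)]
        exact zero_le
    · intro m
      exact le_of_eq (Finset.sum_congr rfl fun y _ => by
        rw [lawSum_zero μ', lawSum_zero μ])
  | succ n ih =>
    intro μ μ' hp hp' hSU hSU' hdom
    haveI : ∀ i, IsProbabilityMeasure (μ i) := hp
    haveI : ∀ i, IsProbabilityMeasure (μ' i) := hp'
    obtain ⟨ihSU, ihdom⟩ := ih (fun i => μ i.succ) (fun i => μ' i.succ)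
      (fun i => hp _) (fun i => hp' _) (fun i => hSU _) (fun i => hSU' _)
      (fun i m => hdom _ m)
    haveI hLP' : IsProbabilityMeasure (lawSum (fun i => μ' i.succ)) :=
      lawSum_prob (fun i => μ' i.succ)
    have hs0 : ∑' x : ℤ, μ 0 {x} ≠ ⊤ := by
      rw [← measure_univ_eq_tsum, measure_univ]; exact ENNReal.one_ne_top
    have hs0' : ∑' x : ℤ, μ' 0 {x} ≠ ⊤ := by
      rw [← measure_univ_eq_tsum, measure_univ]; exact ENNReal.one_ne_top
    have hsρ' : ∑' a : ℤ, lawSum (fun i => μ' i.succ) {a} ≠ ⊤ := by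
      rw [← measure_univ_eq_tsum, measure_univ]; exact ENNReal.one_ne_top
    have hrec' : (fun a => lawSum μ' {a})
        = cv (fun z => μ' 0 {z}) (fun b => lawSum (fun i => μ' i.succ) {b}) :=
      funext (lawSum_succ μ')
    have hrec : (fun a => lawSum μ {a})
        = cv (fun z => μ 0 {z}) (fun b => lawSum (fun i => μ i.succ) {b}) :=
      funext (lawSum_succ μ)
    constructor
    · rw [hrec']
      exact SU_cv (hSU' 0) ihSU hs0'
    · intro m
      calc ∑ y ∈ IS m, lawSum μ' {y}
          = ∑ y ∈ IS m, cv (fun b => lawSum (fun i => μ' i.succ) {b}) (fun z => μ' 0 {z}) y := by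
            rw [← cv_comm]
            exact Finset.sum_congr rfl fun y _ => lawSum_succ μ' y
        _ ≤ ∑ y ∈ IS m, cv (fun b => lawSum (fun i => μ' i.succ) {b}) (fun z => μ 0 {z}) y :=
            stepD ihSU hsρ' (fun m => hdom 0 m) m
        _ = ∑ y ∈ IS m, cv (fun z => μ 0 {z}) (fun b => lawSum (fun i => μ' i.succ) {b}) y := by
            rw [cv_comm]
        _ ≤ ∑ y ∈ IS m, cv (fun z => μ 0 {z}) (fun b => lawSum (fun i => μ i.succ) {b}) y :=
            stepD (hSU 0) hs0 ihdom m
        _ = ∑ y ∈ IS m, lawSum μ {y} :=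
            (Finset.sum_congr rfl fun y _ => lawSum_succ μ y).symm

end AuxStatement11

theorem statement11 (n : ℕ) (μ μ' : Fin n → MeasureTheory.Measure ℤ)
    (hp : ∀ i, MeasureTheory.IsProbabilityMeasure (μ i))
    (hp' : ∀ i, MeasureTheory.IsProbabilityMeasure (μ' i))
    (hs : ∀ i, IsSymmetricZ (μ i)) (hs' : ∀ i, IsSymmetricZ (μ' i))
    (hu : ∀ i, IsUnimodal (μ i)) (hu' : ∀ i, IsUnimodal (μ' i))
    (hd : ∀ i, EpsDom 0 (μ' i) (μ i)) :
    EpsDom 0 (lawSum μ') (lawSum μ) := by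
  classical
  haveI : ∀ i, IsProbabilityMeasure (μ i) := hp
  haveI : ∀ i, IsProbabilityMeasure (μ' i) := hp'
  -- translate the domination hypothesis to centered intervals of atoms
  have hdom : ∀ i (m : ℕ), ∑ y ∈ IS m, μ' i {y} ≤ ∑ y ∈ IS m, μ i {y} := by
    intro i m
    match m with
    | 0 => simp [IS]
    | Nat.succ m =>
      have hSUi : SU (fun x => μ i {x}) := su_of_symm_unimodal (hs i) (hu i)
      have h1 : concQk (μ i) (m+1) = (μ i ((IS (m+1) : Finset ℤ) : Set ℤ)).toReal := by
        apply le_antisymm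
        · apply Real.sSup_le
          · rintro t ⟨A, hA, rfl⟩
            apply ENNReal.toReal_mono (measure_ne_top _ _)
            rw [measure_finset_eq_sum, measure_finset_eq_sum]
            have := lemA hSUi A
            rwa [hA] at this
          · exact ENNReal.toReal_nonneg
        · exact le_csSup (concQk_bddAbove (μ i) (m+1)) ⟨IS (m+1), card_IS _, rfl⟩
      have h2 : (μ' i ((IS (m+1) : Finset ℤ) : Set ℤ)).toReal ≤ concQk (μ' i) (m+1) :=
        le_csSup (concQk_bddAbove (μ' i) (m+1)) ⟨IS (m+1), card_IS _, rfl⟩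
      have h3 := hd i (m+1) (Nat.succ_pos m)
      rw [add_zero, one_mul] at h3
      have h4 : (μ' i ((IS (m+1) : Finset ℤ) : Set ℤ)).toReal
          ≤ (μ i ((IS (m+1) : Finset ℤ) : Set ℤ)).toReal := by
        calc (μ' i ((IS (m+1) : Finset ℤ) : Set ℤ)).toReal ≤ concQk (μ' i) (m+1) := h2
          _ ≤ concQk (μ i) (m+1) := h3
          _ = (μ i ((IS (m+1) : Finset ℤ) : Set ℤ)).toReal := h1
      have h5 := (ENNReal.toReal_le_toReal (measure_ne_top _ _) (measure_ne_top _ _)).mp h4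
      rwa [measure_finset_eq_sum, measure_finset_eq_sum] at h5
  obtain ⟨kSU, kdom⟩ := main_ind n μ μ' hp hp'
    (fun i => su_of_symm_unimodal (hs i) (hu i))
    (fun i => su_of_symm_unimodal (hs' i) (hu' i)) hdom
  haveI hLP : IsProbabilityMeasure (lawSum μ) := lawSum_prob μ
  haveI hLP' : IsProbabilityMeasure (lawSum μ') := lawSum_prob μ'
  intro j hj
  rw [add_zero, one_mul]
  have hub : (lawSum μ ((IS j : Finset ℤ) : Set ℤ)).toReal ≤ concQk (lawSum μ) j :=
    le_csSup (concQk_bddAbove (lawSum μ) j) ⟨IS j, card_IS _, rfl⟩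
  apply Real.sSup_le
  · rintro t ⟨A, hA, rfl⟩
    refine le_trans ?_ hub
    apply ENNReal.toReal_mono (measure_ne_top _ _)
    rw [measure_finset_eq_sum, measure_finset_eq_sum]
    calc ∑ a ∈ A, lawSum μ' {a} ≤ ∑ a ∈ IS A.card, lawSum μ' {a} := lemA kSU A
      _ = ∑ a ∈ IS j, lawSum μ' {a} := by rw [hA]
      _ ≤ ∑ a ∈ IS j, lawSum μ {a} := kdom j
  · exact le_trans ENNReal.toReal_nonneg hub
end
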